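/- Suppose the sink Z is nonempty and V∖Z is finite. Then the matrix I − P_Z is invertible, and for all vertices a, x ∈ V∖Z, the average over ρ ∈ SF(Z) of the odometer u(a,Z;ρ)(x) (which is finite for every ρ) equals the Green function ((I − P_Z)^{-1})_{a,x}. -/

import Mathlib

open Classical

universe u

variable {V : Type u}

/-- A rotor mechanism: for each vertex `x`, `τ x` restricts to a bijection of the
neighbor set of `x` having a single orbit. -/
def IsMechanism (G : SimpleGraph V) (τ : V → V → V) : Prop :=
  ∀ x : V, Set.BijOn (τ x) (G.neighborSet x) (G.neighborSet x) ∧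
    ∀ y ∈ G.neighborSet x, ∀ z ∈ G.neighborSet x, ∃ i : ℕ, (τ x)^[i] y = z

/-- One step of the rotor walk with sink `Z`; the walk freezes once it reaches `Z`. -/
noncomputable def rotorStep [DecidableEq V] (τ : V → V → V) (Z : Set V) :
    V × (V → V) → V × (V → V) := fun p =>
  if p.1 ∈ Z then p
  else (τ p.1 (p.2 p.1), Function.update p.2 p.1 (τ p.1 (p.2 p.1)))

/-- The rotor walk with initial location `a`, sink `Z` and initial rotor
configuration `ρ`: position (first component) and rotor configuration
(second component) at time `t`. -/
noncomputable def rotorWalk [DecidableEq V] (τ : V → V → V) (Z : Set V)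
    (a : V) (ρ : V → V) (t : ℕ) : V × (V → V) :=
  (rotorStep τ Z)^[t] (a, ρ)

/-- `Z`-oriented spanning forests of `G`, viewed as rotor configurations,
normalized to be the identity on `Z` (the values on `Z` are inconsequential). -/
def SFset (G : SimpleGraph V) (Z : Set V) : Set (V → V) :=
  {ρ | (∀ x ∉ Z, G.Adj x (ρ x)) ∧ (∀ x : V, ∃ ℓ : ℕ, ρ^[ℓ] x ∈ Z) ∧ ∀ x ∈ Z, ρ x = x}

/-- The eventual value of an eventually-constant sequence. -/
noncomputable def eventualVal (f : ℕ → V) : V :=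
  if h : ∃ t : ℕ, ∀ s : ℕ, t ≤ s → f s = f t then f h.choose else f 0

/-- The final rotor configuration `σ(a, Z; ρ)` of the rotor walk. -/
noncomputable def finalConfig [DecidableEq V] (τ : V → V → V) (Z : Set V)
    (a : V) (ρ : V → V) : V → V :=
  fun x => eventualVal fun t => (rotorWalk τ Z a ρ t).2 x

/-- `ξ_i(a_0, …, a_{i-1}, Z; ρ)`: the rotor configuration after `i` successive
walkers, started at `a_0, …, a_{i-1}`, have performed rotor walks with sink `Z`. -/
noncomputable def xiConfig [DecidableEq V] (τ : V → V → V) (Z : Set V) (av : ℕ → V) :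
    ℕ → (V → V) → (V → V)
  | 0, ρ => ρ
  | i + 1, ρ => finalConfig τ Z (av i) (xiConfig τ Z av i ρ)

/-- The set of times at which the rotor walk (run until it first reaches the
sink `Z`) is at a vertex of `W`; its cardinality is the odometer `u(a,Z;ρ)(W)`. -/
def visitTimes [DecidableEq V] (τ : V → V → V) (Z : Set V) (a : V) (ρ : V → V)
    (W : Set V) : Set ℕ :=
  {t | (rotorWalk τ Z a ρ t).1 ∈ W ∧ ∀ s < t, (rotorWalk τ Z a ρ s).1 ∉ Z}

/-- The event `E_{r,W}(a,Z)`: the rotor walk with initial location `a` and sink `Z`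
visits `W` some time after visiting a vertex at graph distance at least `r` from `W`. -/
def Eset [DecidableEq V] (G : SimpleGraph V) (τ : V → V → V) (r : ℕ) (W : Set V)
    (a : V) (Z : Set V) : Set (V → V) :=
  {ρ | ∃ t₁ t₂ : ℕ, t₁ < t₂ ∧ (∀ s < t₂, (rotorWalk τ Z a ρ s).1 ∉ Z) ∧
    (∀ w ∈ W, r ≤ G.dist w (rotorWalk τ Z a ρ t₁).1) ∧ (rotorWalk τ Z a ρ t₂).1 ∈ W}

/-- The event `D_r` (relative to the set `Z`): there is an oriented path in `ρ`
from a vertex at graph distance exactly `r` from `Z` to a vertex of `Z`. -/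
def Dset (G : SimpleGraph V) (Z : Set V) (r : ℕ) : Set (V → V) :=
  {ρ | ∃ x : V, ∃ ℓ : ℕ, (∀ w ∈ Z, r ≤ G.dist w x) ∧ (∃ w ∈ Z, G.dist w x = r) ∧
    ρ^[ℓ] x ∈ Z}

/-- The transition matrix `P_Z` of simple random walk on `G` killed upon hitting `Z`. -/
noncomputable def killedP (G : SimpleGraph V) [∀ v : V, Fintype (G.neighborSet v)]
    (Z : Set V) : Matrix {x : V // x ∉ Z} {x : V // x ∉ Z} ℝ :=
  fun x y => if G.Adj x.1 y.1 then (1 : ℝ) / (G.degree x.1) else 0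

/-- The Green function `((I - P_Z)⁻¹)_{a,x}` of simple random walk killed at `Z`,
as a function of a pair of vertices (zero if `V ∖ Z` is infinite or `a ∈ Z` or `x ∈ Z`). -/
noncomputable def greenFn (G : SimpleGraph V) [DecidableEq V]
    [∀ v : V, Fintype (G.neighborSet v)] (Z : Set V) (a x : V) : ℝ :=
  if h : ({y : V | y ∉ Z}).Finite ∧ a ∉ Z ∧ x ∉ Z then
    letI : Fintype {y : V // y ∉ Z} := h.1.fintype
    ((1 - killedP G Z)⁻¹) ⟨a, h.2.1⟩ ⟨x, h.2.2⟩
  else 0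


set_option linter.unusedSectionVars false

section Mech2

variable {V : Type u} {G : SimpleGraph V} [∀ v : V, Fintype (G.neighborSet v)]
variable {τ : V → V → V} (hτ : IsMechanism G τ)
include hτ

lemma mech_mapsTo (x : V) : ∀ {y : V}, y ∈ G.neighborSet x → τ x y ∈ G.neighborSet x :=
  fun hy => (hτ x).1.mapsTo hy

lemma mech_iter_mem (x : V) {y : V} (hy : y ∈ G.neighborSet x) (i : ℕ) :
    (τ x)^[i] y ∈ G.neighborSet x := by
  induction i with
  | zero => exact hy
  | succ n ih => rw [Function.iterate_succ_apply']; exact mech_mapsTo hτ x ih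

/-- there is a positive return time -/
lemma mech_exists_pos_return (x : V) {y : V} (hy : y ∈ G.neighborSet x) :
    ∃ k : ℕ, 0 < k ∧ (τ x)^[k] y = y := by
  obtain ⟨i, hi⟩ := (hτ x).2 (τ x y) (mech_mapsTo hτ x hy) y hy
  exact ⟨i + 1, Nat.succ_pos i, by rw [Function.iterate_succ_apply]; exact hi⟩

/-- least positive return time of `y` -/
noncomputable def mperiod (τ : V → V → V) (x y : V) : ℕ :=
  sInf {k : ℕ | 0 < k ∧ (τ x)^[k] y = y}

lemma mperiod_spec (x : V) {y : V} (hy : y ∈ G.neighborSet x) :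
    0 < mperiod τ x y ∧ (τ x)^[mperiod τ x y] y = y :=
  Nat.sInf_mem (⟨_, (mech_exists_pos_return hτ x hy).choose_spec.1,
    (mech_exists_pos_return hτ x hy).choose_spec.2⟩ : {k : ℕ | 0 < k ∧ (τ x)^[k] y = y}.Nonempty)

lemma mech_iter_mod (x : V) {y : V} (hy : y ∈ G.neighborSet x) (i : ℕ) :
    (τ x)^[i] y = (τ x)^[i % mperiod τ x y] y := by
  obtain ⟨hp, hret⟩ := mperiod_spec hτ x hy
  conv_lhs => rw [← Nat.div_add_mod i (mperiod τ x y)]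
  rw [add_comm, Function.iterate_add_apply]
  congr 1
  generalize i / mperiod τ x y = q
  induction q with
  | zero => simp
  | succ n ih => rw [Nat.mul_succ, Function.iterate_add_apply, hret]; exact ih

lemma mech_iter_inj_lt (x : V) {y : V} (hy : y ∈ G.neighborSet x) {i j : ℕ}
    (hi : i < mperiod τ x y) (hj : j < mperiod τ x y) (hij : (τ x)^[i] y = (τ x)^[j] y) :
    i = j := by
  by_contra hne
  wlog h : i < j generalizing i j
  · exact this hj hi hij.symm (Ne.symm hne) (by omega)
  · have h1 : (τ x)^[mperiod τ x y - j + i] y = y := by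
      have h0 : (τ x)^[mperiod τ x y - j] ((τ x)^[j] y) = y := by
        rw [← Function.iterate_add_apply, Nat.sub_add_cancel hj.le]
        exact (mperiod_spec hτ x hy).2
      rw [← hij, ← Function.iterate_add_apply] at h0
      exact h0
    have h2 : 0 < mperiod τ x y - j + i := by omega
    have h3 : mperiod τ x y - j + i < mperiod τ x y := by omega
    have hle : mperiod τ x y ≤ mperiod τ x y - j + i :=
      Nat.sInf_le (show _ ∈ {k : ℕ | 0 < k ∧ (τ x)^[k] y = y} from ⟨h2, h1⟩)
    omega

/-- the period equals the degree -/
lemma mperiod_eq_degree (x : V) {y : V} (hy : y ∈ G.neighborSet x) :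
    mperiod τ x y = G.degree x := by
  classical
  have hinj : Set.InjOn (fun i => (τ x)^[i] y) (Set.Iio (mperiod τ x y)) := by
    intro i hi j hj hij
    exact mech_iter_inj_lt hτ x hy hi hj hij
  -- the map i ↦ τ^[i] y , i < period, is a bijection onto neighborSet x
  have hsurj : ∀ z ∈ G.neighborSet x, ∃ i < mperiod τ x y, (τ x)^[i] y = z := by
    intro z hz
    obtain ⟨i, hi⟩ := (hτ x).2 y hy z hz
    exact ⟨i % mperiod τ x y, Nat.mod_lt _ (mperiod_spec hτ x hy).1,
      by rw [← mech_iter_mod hτ x hy]; exact hi⟩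
  have hmaps : ∀ i, (τ x)^[i] y ∈ G.neighborSet x := mech_iter_mem hτ x hy
  -- now count
  have h1 : ((Finset.range (mperiod τ x y)).image (fun i => (τ x)^[i] y)) =
      (G.neighborSet x).toFinset := by
    apply Finset.ext
    intro z
    simp only [Finset.mem_image, Finset.mem_range, Set.mem_toFinset]
    constructor
    · rintro ⟨i, _, rfl⟩; exact hmaps i
    · intro hz; obtain ⟨i, hi, hiz⟩ := hsurj z hz; exact ⟨i, hi, hiz⟩
  have h2 : ((Finset.range (mperiod τ x y)).image (fun i => (τ x)^[i] y)).card =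
      mperiod τ x y := by
    rw [Finset.card_image_of_injOn, Finset.card_range]
    intro i hi j hj
    exact mech_iter_inj_lt hτ x hy (Finset.mem_range.1 hi) (Finset.mem_range.1 hj)
  rw [h1] at h2
  rw [← h2, SimpleGraph.degree, SimpleGraph.neighborFinset_def]

lemma mech_iter_degree (x : V) {y : V} (hy : y ∈ G.neighborSet x) :
    (τ x)^[G.degree x] y = y := by
  have h := (mperiod_spec hτ x hy).2
  rwa [mperiod_eq_degree hτ x hy] at h

lemma mech_iter_eq_iff (x : V) {y : V} (hy : y ∈ G.neighborSet x) (i j : ℕ) :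
    (τ x)^[i] y = (τ x)^[j] y ↔ i % G.degree x = j % G.degree x := by
  have hd := mperiod_eq_degree hτ x hy
  constructor
  · intro h
    rw [mech_iter_mod hτ x hy i, mech_iter_mod hτ x hy j] at h
    have := mech_iter_inj_lt hτ x hy (Nat.mod_lt _ (mperiod_spec hτ x hy).1)
      (Nat.mod_lt _ (mperiod_spec hτ x hy).1) h
    rwa [hd] at this
  · intro h
    rw [mech_iter_mod hτ x hy i, mech_iter_mod hτ x hy j, hd, h]

end Mech2

section Walk

variable {V : Type u} [DecidableEq V] {G : SimpleGraph V} [∀ v : V, Fintype (G.neighborSet v)]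
variable {τ : V → V → V} {Z : Set V} {a : V} {ρ : V → V}

/-- Position of the rotor walk. -/
noncomputable def Xw (τ : V → V → V) (Z : Set V) (a : V) (ρ : V → V) (t : ℕ) : V :=
  (rotorWalk τ Z a ρ t).1

/-- Configuration of the rotor walk. -/
noncomputable def Cw (τ : V → V → V) (Z : Set V) (a : V) (ρ : V → V) (t : ℕ) : V → V :=
  (rotorWalk τ Z a ρ t).2

lemma Xw_zero : Xw τ Z a ρ 0 = a := rfl

lemma Cw_zero : Cw τ Z a ρ 0 = ρ := rfl

lemma rotorWalk_succ (t : ℕ) :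
    rotorWalk τ Z a ρ (t + 1) = rotorStep τ Z (rotorWalk τ Z a ρ t) :=
  Function.iterate_succ_apply' _ _ _

lemma Xw_succ_out (t : ℕ) (h : Xw τ Z a ρ t ∉ Z) :
    Xw τ Z a ρ (t + 1) = τ (Xw τ Z a ρ t) (Cw τ Z a ρ t (Xw τ Z a ρ t)) := by
  unfold Xw at h ⊢
  rw [rotorWalk_succ, rotorStep, if_neg h]
  rfl

lemma Cw_succ_out (t : ℕ) (h : Xw τ Z a ρ t ∉ Z) :
    Cw τ Z a ρ (t + 1) =
      Function.update (Cw τ Z a ρ t) (Xw τ Z a ρ t) (Xw τ Z a ρ (t + 1)) := by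
  rw [Xw_succ_out t h]
  unfold Xw at h
  unfold Cw Xw
  rw [rotorWalk_succ, rotorStep, if_neg h]

lemma rotorWalk_frozen (t : ℕ) (h : Xw τ Z a ρ t ∈ Z) :
    ∀ s : ℕ, t ≤ s → rotorWalk τ Z a ρ s = rotorWalk τ Z a ρ t := by
  intro s hs
  obtain ⟨k, rfl⟩ := Nat.exists_eq_add_of_le hs
  induction k with
  | zero => rfl
  | succ n ih =>
    have : t + (n + 1) = (t + n) + 1 := by omega
    unfold Xw at h
    rw [this, rotorWalk_succ, ih (by omega), rotorStep, if_pos h]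

lemma Cw_succ_ne (t : ℕ) (x : V) (hx : x ≠ Xw τ Z a ρ t) :
    Cw τ Z a ρ (t + 1) x = Cw τ Z a ρ t x := by
  by_cases h : Xw τ Z a ρ t ∈ Z
  · unfold Cw; rw [rotorWalk_frozen t h (t+1) (by omega)]
  · rw [Cw_succ_out t h, Function.update_of_ne hx]

/-- Valid configurations: rotors point at neighbors off `Z`, identity on `Z`. -/
def ValidConf (G : SimpleGraph V) (Z : Set V) (ρ : V → V) : Prop :=
  (∀ x ∉ Z, ρ x ∈ G.neighborSet x) ∧ ∀ x ∈ Z, ρ x = x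

lemma SFset_valid (hρ : ρ ∈ SFset G Z) : ValidConf G Z ρ :=
  ⟨fun x hx => hρ.1 x hx, hρ.2.2⟩

variable (hτ : IsMechanism G τ) (hv : ValidConf G Z ρ)
include hτ hv

lemma Cw_valid (t : ℕ) : ValidConf G Z (Cw τ Z a ρ t) := by
  induction t with
  | zero => exact hv
  | succ n ih =>
    by_cases h : Xw τ Z a ρ n ∈ Z
    · unfold Cw; rw [rotorWalk_frozen n h (n+1) (by omega)]; exact ih
    · constructor
      · intro x hx
        by_cases hxn : x = Xw τ Z a ρ n
        · subst hxn
          rw [Cw_succ_out n h, Function.update_self, Xw_succ_out n h]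
          exact mech_mapsTo hτ _ (ih.1 _ hx)
        · rw [Cw_succ_ne n x hxn]; exact ih.1 x hx
      · intro x hx
        have hxn : x ≠ Xw τ Z a ρ n := fun he => h (he ▸ hx)
        rw [Cw_succ_ne n x hxn]; exact ih.2 x hx

/-- number of visits to `x` before time `t` -/
noncomputable def nvis (τ : V → V → V) (Z : Set V) (a : V) (ρ : V → V) (x : V) (t : ℕ) : ℕ :=
  ((Finset.range t).filter (fun s => Xw τ Z a ρ s = x)).card

omit hτ hv in
lemma nvis_succ (x : V) (t : ℕ) :
    nvis τ Z a ρ x (t + 1) = nvis τ Z a ρ x t + (if Xw τ Z a ρ t = x then 1 else 0) := by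
  unfold nvis
  rw [Finset.range_add_one, Finset.filter_insert]
  split
  · rw [Finset.card_insert_of_notMem (by simp)]
  · simp

omit hτ hv in
lemma nvis_mono {x : V} {s t : ℕ} (h : s ≤ t) : nvis τ Z a ρ x s ≤ nvis τ Z a ρ x t := by
  unfold nvis
  exact Finset.card_le_card (Finset.filter_subset_filter _
    (Finset.range_subset_range.2 h))

omit hτ hv in
lemma nvis_zero (x : V) : nvis τ Z a ρ x 0 = 0 := by simp [nvis]

lemma Cw_eq_iter (x : V) (hx : x ∉ Z) (t : ℕ) :
    Cw τ Z a ρ t x = (τ x)^[nvis τ Z a ρ x t] (ρ x) := by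
  induction t with
  | zero => simp [Cw_zero, nvis_zero]
  | succ n ih =>
    by_cases h : Xw τ Z a ρ n ∈ Z
    · have hxn : x ≠ Xw τ Z a ρ n := fun he => hx (he ▸ h)
      rw [Cw_succ_ne n x hxn, nvis_succ, if_neg (fun he => hxn he.symm), ih]
      simp
    · by_cases hxn : Xw τ Z a ρ n = x
      · rw [nvis_succ, if_pos hxn, ← hxn, Cw_succ_out n h, Function.update_self,
          Xw_succ_out n h, hxn, ih]
        exact (Function.iterate_succ_apply' _ _ _).symm
      · rw [Cw_succ_ne n x (fun he => hxn he.symm), nvis_succ, if_neg hxn, ih]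
        simp

lemma Xw_succ_eq_iter (t : ℕ) (h : Xw τ Z a ρ t ∉ Z) :
    Xw τ Z a ρ (t + 1) = (τ (Xw τ Z a ρ t))^[nvis τ Z a ρ (Xw τ Z a ρ t) t + 1]
      (ρ (Xw τ Z a ρ t)) := by
  rw [Xw_succ_out t h, Cw_eq_iter hτ hv _ h]
  exact (Function.iterate_succ_apply' _ _ _).symm

lemma Xw_succ_mem (t : ℕ) (h : Xw τ Z a ρ t ∉ Z) :
    Xw τ Z a ρ (t + 1) ∈ G.neighborSet (Xw τ Z a ρ t) := by
  rw [Xw_succ_out t h]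
  exact mech_mapsTo hτ _ ((Cw_valid hτ hv t).1 _ h)

omit hτ hv in
lemma exists_visit_of_lt {x : V} {k s : ℕ} (h : k < nvis τ Z a ρ x s) :
    ∃ t, t < s ∧ Xw τ Z a ρ t = x ∧ nvis τ Z a ρ x t = k := by
  have hex : ∃ t, k < nvis τ Z a ρ x t := ⟨s, h⟩
  classical
  have hsp : k < nvis τ Z a ρ x (Nat.find hex) := Nat.find_spec hex
  have hne : Nat.find hex ≠ 0 := by
    intro h0
    rw [h0, nvis_zero] at hsp; omega
  obtain ⟨t, ht⟩ := Nat.exists_eq_succ_of_ne_zero hne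
  rw [ht] at hsp
  have hnot : ¬ k < nvis τ Z a ρ x t := Nat.find_min hex (by omega)
  rw [nvis_succ] at hsp
  have hXt : Xw τ Z a ρ t = x := by
    by_contra hc
    rw [if_neg hc] at hsp; omega
  rw [if_pos hXt] at hsp
  refine ⟨t, ?_, hXt, by omega⟩
  by_contra hc
  have := nvis_mono (x := x) (τ := τ) (Z := Z) (a := a) (ρ := ρ) (Nat.le_of_not_lt hc)
  omega

end Walk

section Term

variable {V : Type u} [DecidableEq V] {G : SimpleGraph V} [∀ v : V, Fintype (G.neighborSet v)]
variable {τ : V → V → V} {Z : Set V} {a : V} {ρ : V → V}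

lemma infinite_of_unbounded {S : Set ℕ} (h : ∀ n : ℕ, ∃ t ∈ S, n ≤ t) : S.Infinite := by
  intro hfin
  obtain ⟨b, hb⟩ := hfin.bddAbove
  obtain ⟨t, ht, hbt⟩ := h (b + 1)
  exact absurd (hb ht) (by omega)

lemma nvis_unbounded {x : V} (h : {t : ℕ | Xw τ Z a ρ t = x}.Infinite) (k : ℕ) :
    ∃ s : ℕ, k < nvis τ Z a ρ x s := by
  obtain ⟨F, hFsub, hFcard⟩ := h.exists_subset_card_eq (k + 1)
  have hne : F.Nonempty := by
    rw [← Finset.card_pos, hFcard]; omega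
  refine ⟨F.max' hne + 1, ?_⟩
  have hsub : F ⊆ (Finset.range (F.max' hne + 1)).filter (fun s => Xw τ Z a ρ s = x) := by
    intro t ht
    rw [Finset.mem_filter, Finset.mem_range]
    exact ⟨by have := F.le_max' t ht; omega, hFsub ht⟩
  have := Finset.card_le_card hsub
  unfold nvis
  omega

variable (hτ : IsMechanism G τ) (hv : ValidConf G Z ρ)
include hτ hv

lemma neighbor_infinite (hall : ∀ t, Xw τ Z a ρ t ∉ Z) {x : V}
    (hx : {t : ℕ | Xw τ Z a ρ t = x}.Infinite) {w : V} (hw : w ∈ G.neighborSet x) :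
    {t : ℕ | Xw τ Z a ρ t = w}.Infinite := by
  obtain ⟨t₀, ht₀⟩ := hx.nonempty
  have hxZ : x ∉ Z := ht₀ ▸ hall t₀
  have hr : ρ x ∈ G.neighborSet x := hv.1 x hxZ
  have hd : 0 < G.degree x := by
    rw [G.degree_pos_iff_exists_adj x]; exact ⟨w, hw⟩
  apply infinite_of_unbounded
  intro n
  set k := nvis τ Z a ρ x n with hk
  obtain ⟨i, hi⟩ := (hτ x).2 _ (mech_iter_mem hτ x hr (k + G.degree x + 1)) w hw
  set m := k + G.degree x + i with hm
  have hmw : (τ x)^[m + 1] (ρ x) = w := by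
    have : m + 1 = i + (k + G.degree x + 1) := by omega
    rw [this, Function.iterate_add_apply]
    exact hi
  obtain ⟨s, hs⟩ := nvis_unbounded hx m
  obtain ⟨t, hts, hXt, hnt⟩ := exists_visit_of_lt hs
  have htn : n ≤ t := by
    by_contra hc
    have := nvis_mono (x := x) (τ := τ) (Z := Z) (a := a) (ρ := ρ)
      (show t ≤ n by omega)
    omega
  refine ⟨t + 1, ?_, by omega⟩
  show Xw τ Z a ρ (t + 1) = w
  have := Xw_succ_eq_iter hτ hv t (hXt ▸ hxZ)
  rw [hXt] at this
  rw [this, hnt, hmw]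

lemma no_infinite_walk (hall : ∀ t, Xw τ Z a ρ t ∉ Z) :
    ∀ (u z : V) (_ : G.Walk u z), z ∈ Z → ¬ {t : ℕ | Xw τ Z a ρ t = u}.Infinite := by
  intro u z W
  induction W with
  | nil =>
    intro hz hinf
    obtain ⟨t, ht⟩ := hinf.nonempty
    exact (hall t) (ht ▸ hz)
  | cons hadj W ih =>
    intro hz hinf
    exact ih hz (neighbor_infinite hτ hv hall hinf hadj)

lemma walk_terminates (hconn : G.Connected) (hZ : Z.Nonempty)
    [Fintype {y : V // y ∉ Z}] :
    ∃ t, Xw τ Z a ρ t ∈ Z := by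
  by_contra hc
  push_neg at hc
  have : ∃ y : {y : V // y ∉ Z}, ((fun t => (⟨Xw τ Z a ρ t, hc t⟩ : {y : V // y ∉ Z})) ⁻¹'
      {y}).Infinite := by
    obtain ⟨y, hy⟩ := Finite.exists_infinite_fiber
      (fun t => (⟨Xw τ Z a ρ t, hc t⟩ : {y : V // y ∉ Z}))
    exact ⟨y, Set.infinite_coe_iff.1 hy⟩
  obtain ⟨y, hy⟩ := this
  have hy' : {t : ℕ | Xw τ Z a ρ t = y.1}.Infinite := by
    apply Set.Infinite.mono _ hy
    intro t ht
    simp only [Set.mem_preimage, Set.mem_singleton_iff] at ht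
    exact congrArg Subtype.val ht
  obtain ⟨z, hz⟩ := hZ
  exact no_infinite_walk hτ hv hc y.1 z ((hconn y.1 z).some) hz hy'

end Term

section Count

variable {V : Type u} [DecidableEq V] {G : SimpleGraph V} [∀ v : V, Fintype (G.neighborSet v)]
variable {τ : V → V → V} {Z : Set V} {a : V} {ρ : V → V}

/-- number of `y → w` transitions before time `T` -/
noncomputable def ecnt (τ : V → V → V) (Z : Set V) (a : V) (ρ : V → V) (T : ℕ) (y w : V) : ℕ :=
  ((Finset.range T).filter (fun t => Xw τ Z a ρ t = y ∧ Xw τ Z a ρ (t + 1) = w)).card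

variable {T : ℕ} (hTZ : Xw τ Z a ρ T ∈ Z) (hTlt : ∀ s, s < T → Xw τ Z a ρ s ∉ Z)
  (ha : a ∉ Z)

include hTZ ha in
lemma T_pos : 0 < T := by
  rcases Nat.eq_zero_or_pos T with h | h
  · subst h; exact absurd hTZ ha
  · exact h

include hTZ hTlt in
lemma visitTimes_eq_coe {x : V} (hx : x ∉ Z) :
    visitTimes τ Z a ρ {x} =
      ↑((Finset.range T).filter (fun t => Xw τ Z a ρ t = x)) := by
  ext t
  simp only [visitTimes, Set.mem_setOf_eq, Set.mem_singleton_iff, Finset.coe_filter,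
    Finset.mem_range]
  constructor
  · rintro ⟨h1, h2⟩
    refine ⟨?_, h1⟩
    by_contra hc
    rcases Nat.lt_or_ge T t with h | h
    · exact h2 T h hTZ
    · have ht : t = T := by omega
      subst ht
      exact hx (h1 ▸ hTZ)
  · rintro ⟨h1, h2⟩
    exact ⟨h2, fun s hs => hTlt s (by omega)⟩

include hTZ hTlt ha in
lemma flow_identity [Fintype {y : V // y ∉ Z}] {x : V} (hx : x ∉ Z) :
    nvis τ Z a ρ x T = (if a = x then 1 else 0) +
      ∑ y : {y : V // y ∉ Z}, ecnt τ Z a ρ T y.1 x := by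
  classical
  set A := (Finset.range T).filter (fun t => Xw τ Z a ρ t = x) with hAdef
  set B := (Finset.range T).filter (fun t => Xw τ Z a ρ (t + 1) = x) with hBdef
  have hTpos : 0 < T := T_pos hTZ ha
  have hA : A = (if a = x then {0} else ∅) ∪ B.image (· + 1) := by
    ext s
    simp only [hAdef, hBdef, Finset.mem_filter, Finset.mem_range, Finset.mem_union,
      Finset.mem_image]
    constructor
    · rintro ⟨hsT, hXs⟩
      match s with
      | 0 =>
        left
        have hax : a = x := hXs
        rw [if_pos hax]
        exact Finset.mem_singleton_self 0
      | (t + 1) =>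
        right
        exact ⟨t, ⟨by omega, hXs⟩, rfl⟩
    · intro h
      rcases h with h | ⟨t, ⟨htT, hXt⟩, rfl⟩
      · split at h
        · rename_i hax
          rw [Finset.mem_singleton] at h
          subst h
          exact ⟨hTpos, show Xw τ Z a ρ 0 = x from hax⟩
        · exact absurd h (Finset.notMem_empty s)
      · refine ⟨?_, hXt⟩
        rcases Nat.lt_or_ge (t + 1) T with h | h
        · exact h
        · have hteq : t + 1 = T := by omega
          rw [hteq] at hXt
          exact absurd (hXt ▸ hTZ) hx
  have hdisj : Disjoint (if a = x then ({0} : Finset ℕ) else ∅) (B.image (· + 1)) := by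
    split
    · rw [Finset.disjoint_singleton_left]
      simp only [Finset.mem_image]
      rintro ⟨t, _, ht⟩
      omega
    · exact Finset.disjoint_empty_left _
  have hcardA : A.card = (if a = x then 1 else 0) + B.card := by
    rw [hA, Finset.card_union_of_disjoint hdisj, Finset.card_image_of_injective _
      (fun i j hij => by omega)]
    congr 1
    split <;> simp
  have hfib : B.card = ∑ y : {y : V // y ∉ Z}, ecnt τ Z a ρ T y.1 x := by
    have := Finset.card_eq_sum_card_fiberwise
      (f := fun t => if h : Xw τ Z a ρ t ∉ Z then (⟨Xw τ Z a ρ t, h⟩ : {y : V // y ∉ Z})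
        else ⟨a, ha⟩)
      (s := B) (t := Finset.univ) (fun t _ => Finset.mem_univ _)
    rw [this]
    apply Finset.sum_congr rfl
    intro y _
    unfold ecnt
    congr 1
    ext t
    simp only [hBdef, Finset.mem_filter, Finset.mem_range]
    constructor
    · rintro ⟨⟨htT, hXt⟩, hft⟩
      refine ⟨htT, ?_, hXt⟩
      rw [dif_pos (hTlt t htT)] at hft
      exact congrArg Subtype.val hft
    · rintro ⟨htT, hXty, hXt⟩
      refine ⟨⟨htT, hXt⟩, ?_⟩
      rw [dif_pos (hTlt t htT)]
      exact Subtype.ext hXty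
  unfold nvis
  rw [← hAdef, hcardA, hfib]

include hTlt in
lemma ecnt_eq_rotor_count (hτ : IsMechanism G τ) (hv : ValidConf G Z ρ)
    {y : V} (hy : y ∉ Z) (w : V) :
    ecnt τ Z a ρ T y w =
      ((Finset.range (nvis τ Z a ρ y T)).filter
        (fun k => (τ y)^[k + 1] (ρ y) = w)).card := by
  classical
  unfold ecnt
  apply Finset.card_bij (fun t _ => nvis τ Z a ρ y t)
  · intro t ht
    simp only [Finset.mem_filter, Finset.mem_range] at ht ⊢
    obtain ⟨htT, hXt, hXt1⟩ := ht
    constructor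
    · have h1 : nvis τ Z a ρ y (t + 1) ≤ nvis τ Z a ρ y T := nvis_mono (by omega)
      rw [nvis_succ, if_pos hXt] at h1
      omega
    · have := Xw_succ_eq_iter hτ hv t (hXt ▸ hy)
      rw [hXt] at this
      rw [← this, hXt1]
  · intro t ht t' ht' heq
    simp only [Finset.mem_filter, Finset.mem_range] at ht ht'
    by_contra hne
    rcases Nat.lt_or_ge t t' with h | h
    · have h1 : nvis τ Z a ρ y (t + 1) ≤ nvis τ Z a ρ y t' := nvis_mono (by omega)
      rw [nvis_succ, if_pos ht.2.1] at h1
      omega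
    · have h' : t' < t := by omega
      have h1 : nvis τ Z a ρ y (t' + 1) ≤ nvis τ Z a ρ y t := nvis_mono (by omega)
      rw [nvis_succ, if_pos ht'.2.1] at h1
      omega
  · intro k hk
    simp only [Finset.mem_filter, Finset.mem_range] at hk
    obtain ⟨hku, hkw⟩ := hk
    obtain ⟨t, htT, hXt, hnt⟩ := exists_visit_of_lt hku
    refine ⟨t, ?_, hnt⟩
    simp only [Finset.mem_filter, Finset.mem_range]
    refine ⟨htT, hXt, ?_⟩
    have := Xw_succ_eq_iter hτ hv t (hXt ▸ hy)
    rw [hXt] at this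
    rw [this, hnt, hkw]

end Count

section Arith

variable {V : Type u} [DecidableEq V] {G : SimpleGraph V} [∀ v : V, Fintype (G.neighborSet v)]
variable {τ : V → V → V} {Z : Set V} {a : V} {ρ : V → V}

/-- index of `y` in the rotor orbit starting at `w` -/
noncomputable def gidx (τ : V → V → V) (x w y : V) : ℕ := sInf {i : ℕ | (τ x)^[i] w = y}

variable (hτ : IsMechanism G τ)
include hτ

lemma gidx_iter (x : V) {w y : V} (hw : w ∈ G.neighborSet x) (hy : y ∈ G.neighborSet x) :
    (τ x)^[gidx τ x w y] w = y :=
  Nat.sInf_mem (Set.nonempty_def.2 ((hτ x).2 w hw y hy))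

lemma gidx_lt (x : V) {w y : V} (hw : w ∈ G.neighborSet x) (hy : y ∈ G.neighborSet x) :
    gidx τ x w y < G.degree x := by
  have hd : 0 < G.degree x := by
    rw [G.degree_pos_iff_exists_adj x]; exact ⟨w, hw⟩
  have h1 : (τ x)^[gidx τ x w y % G.degree x] w = y := by
    rw [← mperiod_eq_degree hτ x hw, ← mech_iter_mod hτ x hw]
    exact gidx_iter hτ x hw hy
  have h2 : gidx τ x w y ≤ gidx τ x w y % G.degree x := Nat.sInf_le h1
  have h3 : gidx τ x w y % G.degree x ≤ gidx τ x w y := Nat.mod_le _ _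
  have h4 : gidx τ x w y % G.degree x < G.degree x := Nat.mod_lt _ hd
  omega

lemma iter_eq_iff_gidx (x : V) {w y : V} (hw : w ∈ G.neighborSet x)
    (hy : y ∈ G.neighborSet x) (j : ℕ) :
    (τ x)^[j] w = y ↔ j % G.degree x = gidx τ x w y := by
  constructor
  · intro h
    have := (mech_iter_eq_iff hτ x hw j (gidx τ x w y)).1
      (by rw [h, gidx_iter hτ x hw hy])
    rwa [Nat.mod_eq_of_lt (gidx_lt hτ x hw hy)] at this
  · intro h
    have := (mech_iter_eq_iff hτ x hw j (gidx τ x w y)).2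
      (by rw [h, Nat.mod_eq_of_lt (gidx_lt hτ x hw hy)])
    rw [this, gidx_iter hτ x hw hy]

omit hτ in
lemma card_filter_mod {d : ℕ} (hd : 0 < d) {g : ℕ} (hg : g < d) (u : ℕ) :
    d * ((Finset.range u).filter (fun k => (k + 1) % d = g)).card
      + (u + (d - g) % d) % d = u + (d - g) % d := by
  classical
  set hh := (d - g) % d with hhh
  have hhlt : hh < d := Nat.mod_lt _ hd
  have hsum : (g + hh) % d = 0 := by
    rcases Nat.eq_zero_or_pos g with hg0 | hg0
    · subst hg0
      simp [hhh, Nat.mod_self]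
    · have : hh = d - g := Nat.mod_eq_of_lt (by omega)
      rw [this]
      have : g + (d - g) = d := by omega
      rw [this, Nat.mod_self]
  induction u with
  | zero =>
    simp [Nat.mod_eq_of_lt hhlt]
  | succ n ih =>
    rw [Finset.range_add_one, Finset.filter_insert]
    set A := (n + hh) % d with hA
    have hAlt : A < d := Nat.mod_lt _ hd
    have hB : (n + 1 + hh) % d = (A + 1) % d := by
      have h1 : n + hh ≡ A [MOD d] := (Nat.mod_modEq _ _).symm
      have h2 : (n + hh) + 1 ≡ A + 1 [MOD d] := h1.add_right 1
      have h3 : n + 1 + hh = (n + hh) + 1 := by omega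
      rw [h3]
      exact h2
    have hiff : (n + 1) % d = g ↔ (n + 1 + hh) % d = 0 := by
      constructor
      · intro h
        have h1 : n + 1 + hh ≡ g + hh [MOD d] := by
          have : n + 1 ≡ g [MOD d] := by
            unfold Nat.ModEq
            rw [h, Nat.mod_eq_of_lt hg]
          exact this.add_right hh
        rw [Nat.ModEq] at h1
        rw [h1, hsum]
      · intro h
        have h1 : n + 1 + (g + hh) ≡ (n + 1) + 0 [MOD d] :=
          Nat.ModEq.add_left (n + 1) (by unfold Nat.ModEq; rw [hsum, Nat.zero_mod])
        have h2 : (n + 1) % d = (n + 1 + (g + hh)) % d := by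
          have h1' := h1
          unfold Nat.ModEq at h1'
          rw [Nat.add_zero] at h1'
          exact h1'.symm
        have h3 : n + 1 + (g + hh) = (n + 1 + hh) + g := by omega
        have h4 : ((n + 1 + hh) + g) % d = (0 + g) % d :=
          Nat.ModEq.add_right g (by unfold Nat.ModEq; rw [h, Nat.zero_mod])
        rw [h2, h3, h4, Nat.zero_add, Nat.mod_eq_of_lt hg]
    by_cases hc : (n + 1) % d = g
    · rw [if_pos hc]
      have hB0 : (n + 1 + hh) % d = 0 := hiff.1 hc
      have hApred : A + 1 = d := by
        have : (A + 1) % d = 0 := by rw [← hB]; exact hB0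
        have hdvd : d ∣ (A + 1) := Nat.dvd_of_mod_eq_zero this
        have : d ≤ A + 1 := Nat.le_of_dvd (by omega) hdvd
        omega
      rw [Finset.card_insert_of_notMem (by simp), hB0, Nat.mul_add, Nat.mul_one]
      omega
    · rw [if_neg hc]
      have hBne : (n + 1 + hh) % d ≠ 0 := fun h => hc (hiff.2 h)
      have hAlt1 : A + 1 < d := by
        rcases Nat.lt_or_ge (A + 1) d with h | h
        · exact h
        · have : A + 1 = d := by omega
          rw [hB, this, Nat.mod_self] at hBne
          exact absurd rfl hBne
      have : (n + 1 + hh) % d = A + 1 := by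
        rw [hB, Nat.mod_eq_of_lt hAlt1]
      omega

lemma hh_shift (x : V) {r y : V} (hr : r ∈ G.neighborSet x) (hy : y ∈ G.neighborSet x)
    (u : ℕ) :
    (u + (G.degree x - gidx τ x r y) % G.degree x) % G.degree x
      = (G.degree x - gidx τ x ((τ x)^[u] r) y) % G.degree x := by
  set d := G.degree x with hd
  have hdpos : 0 < d := by
    rw [hd, G.degree_pos_iff_exists_adj x]; exact ⟨r, hr⟩
  set g := gidx τ x r y with hg
  set σr := (τ x)^[u] r with hσ
  have hσmem : σr ∈ G.neighborSet x := mech_iter_mem hτ x hr u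
  set gs := gidx τ x σr y with hgs
  have hglt : g < d := gidx_lt hτ x hr hy
  have hgslt : gs < d := gidx_lt hτ x hσmem hy
  -- key : (gs + u) % d = g
  have key : (gs + u) % d = g := by
    have h1 : (τ x)^[gs + u] r = y := by
      rw [Function.iterate_add_apply]
      exact gidx_iter hτ x hσmem hy
    exact (iter_eq_iff_gidx hτ x hr hy (gs + u)).1 h1
  -- congruences
  have e1 : ((d - g) % d + g) % d = 0 := by
    rcases Nat.eq_zero_or_pos g with h0 | h0
    · rw [h0]; simp
    · have h2 : (d - g) % d = d - g := Nat.mod_eq_of_lt (by omega)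
      rw [h2]
      have : d - g + g = d := by omega
      rw [this, Nat.mod_self]
  have e2 : ((d - gs) % d + gs) % d = 0 := by
    rcases Nat.eq_zero_or_pos gs with h0 | h0
    · rw [h0]; simp
    · have h2 : (d - gs) % d = d - gs := Nat.mod_eq_of_lt (by omega)
      rw [h2]
      have : d - gs + gs = d := by omega
      rw [this, Nat.mod_self]
  -- show both sides congruent mod d and reduced
  have main : (u + (d - g) % d) + (gs + g) ≡ ((d - gs) % d) + (gs + g) [MOD d] := by
    have l1 : (u + (d - g) % d) + (gs + g) = (gs + u) + ((d - g) % d + g) := by omega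
    have l2 : ((d - gs) % d) + (gs + g) = ((d - gs) % d + gs) + g := by omega
    rw [l1, l2]
    calc (gs + u) + ((d - g) % d + g)
        ≡ g + ((d - g) % d + g) [MOD d] := by
          exact Nat.ModEq.add_right _ (by unfold Nat.ModEq; rw [key, Nat.mod_eq_of_lt hglt])
      _ ≡ g + 0 [MOD d] := by
          exact Nat.ModEq.add_left _ (by unfold Nat.ModEq; rw [e1, Nat.zero_mod])
      _ ≡ 0 + g [MOD d] := by rw [Nat.add_zero, Nat.zero_add]
      _ ≡ ((d - gs) % d + gs) + g [MOD d] := by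
          exact Nat.ModEq.add_right _ (by unfold Nat.ModEq; rw [e2, Nat.zero_mod])
  have main2 : (u + (d - g) % d) ≡ (d - gs) % d [MOD d] :=
    Nat.ModEq.add_right_cancel (Nat.ModEq.refl (gs + g)) main
  have hlt : (d - gs) % d < d := Nat.mod_lt _ hdpos
  rw [Nat.ModEq] at main2
  rw [main2, Nat.mod_eq_of_lt hlt]

/-- the per-edge rotor identity -/
lemma edge_identity (hv : ValidConf G Z ρ) {T : ℕ}
    (hTlt : ∀ s, s < T → Xw τ Z a ρ s ∉ Z)
    {y : V} (hy : y ∉ Z) {w : V} (hw : w ∈ G.neighborSet y) :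
    G.degree y * ecnt τ Z a ρ T y w
      + (G.degree y - gidx τ y (Cw τ Z a ρ T y) w) % G.degree y
      = nvis τ Z a ρ y T + (G.degree y - gidx τ y (ρ y) w) % G.degree y := by
  classical
  have hrmem : ρ y ∈ G.neighborSet y := hv.1 y hy
  have hdpos : 0 < G.degree y := by
    rw [G.degree_pos_iff_exists_adj y]; exact ⟨ρ y, hrmem⟩
  have hglt : gidx τ y (ρ y) w < G.degree y := gidx_lt hτ y hrmem hw
  have hecnt : ecnt τ Z a ρ T y w =
      ((Finset.range (nvis τ Z a ρ y T)).filter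
        (fun k => (k + 1) % G.degree y = gidx τ y (ρ y) w)).card := by
    rw [ecnt_eq_rotor_count hTlt hτ hv hy w]
    congr 1
    apply Finset.filter_congr
    intro k _
    exact iter_eq_iff_gidx hτ y hrmem hw (k + 1)
  have harith := card_filter_mod hdpos hglt (nvis τ Z a ρ y T)
  have hCw : Cw τ Z a ρ T y = (τ y)^[nvis τ Z a ρ y T] (ρ y) := Cw_eq_iter hτ hv y hy T
  have hshift := hh_shift hτ y hrmem hw (nvis τ Z a ρ y T)
  rw [hCw, ← hshift, hecnt]
  omega
end Arith

section Inv

variable {V : Type u} [DecidableEq V] {G : SimpleGraph V} [∀ v : V, Fintype (G.neighborSet v)]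
variable {τ : V → V → V} {Z : Set V} {a : V} {ρ : V → V}

lemma iterate_mod_of_return {f : V → V} {y : V} {k : ℕ} (hk : 0 < k) (h : f^[k] y = y)
    (j : ℕ) : f^[j] y = f^[j % k] y := by
  conv_lhs => rw [← Nat.div_add_mod j k]
  rw [add_comm, Function.iterate_add_apply]
  congr 1
  generalize j / k = q
  induction q with
  | zero => simp
  | succ n ih => rw [Nat.mul_succ, Function.iterate_add_apply, h]; exact ih

lemma iterate_return_mul {f : V → V} {y : V} {k : ℕ} (h : f^[k] y = y) (m : ℕ) :
    f^[k * m] y = y := by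
  induction m with
  | zero => simp
  | succ n ih => rw [Nat.mul_succ, Function.iterate_add_apply, h]; exact ih

/-- a spanning-forest configuration has no cycles outside `Z` -/
lemma SF_no_cycle (hρ : ρ ∈ SFset G Z) {x : V} (hx : x ∉ Z) {k : ℕ} (hk : 0 < k)
    (hret : ρ^[k] x = x) : False := by
  obtain ⟨ℓ, hℓ⟩ := hρ.2.1 x
  have habs : ∀ j, ρ^[j] (ρ^[ℓ] x) = ρ^[ℓ] x :=
    fun j => Function.iterate_fixed (hρ.2.2 _ hℓ) j
  have h1 : ρ^[k * (ℓ + 1)] x = x := iterate_return_mul hret (ℓ + 1)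
  have h2 : k * (ℓ + 1) = (k * (ℓ + 1) - ℓ) + ℓ := by
    have : ℓ ≤ k * (ℓ + 1) := by nlinarith
    omega
  rw [h2, Function.iterate_add_apply, habs] at h1
  exact hx (h1 ▸ hℓ)

lemma update_iter_eq {ρ' : V → V} {v w' : V} {x : V} {n : ℕ}
    (h : ∀ i, i < n → (Function.update ρ' v w')^[i] x ≠ v) :
    ∀ i, i ≤ n → (Function.update ρ' v w')^[i] x = ρ'^[i] x := by
  intro i hi
  induction i with
  | zero => rfl
  | succ m ih =>
    rw [Function.iterate_succ_apply', Function.iterate_succ_apply', ih (by omega)]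
    apply Function.update_of_ne
    have := h m (by omega)
    rwa [ih (by omega)] at this

lemma update_iter_eq' {ρ' : V → V} {v w' : V} {x : V} {n : ℕ}
    (h : ∀ i, i < n → ρ'^[i] x ≠ v) :
    ∀ i, i ≤ n → (Function.update ρ' v w')^[i] x = ρ'^[i] x := by
  intro i hi
  induction i with
  | zero => rfl
  | succ m ih =>
    rw [Function.iterate_succ_apply', Function.iterate_succ_apply', ih (by omega)]
    exact Function.update_of_ne (h m (by omega)) _ _

/-- the reconstructed previous vertex of the rotor walk -/
noncomputable def prevVertex (τ : V → V → V) (Z : Set V) (a : V) (ρ' : V → V) (w : V) : V :=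
  if h : w ∉ Z ∧ ∃ k, 0 < k ∧ ρ'^[k] w = w then
    ρ'^[Nat.find h.2 - 1] w
  else if h2 : ∃ n, 0 < n ∧ ρ'^[n] a = w then
    ρ'^[Nat.find h2 - 1] a
  else a

variable (hτ : IsMechanism G τ) (hρ : ρ ∈ SFset G Z)
include hτ hρ

lemma inv_main {T : ℕ} (hTlt : ∀ s, s < T → Xw τ Z a ρ s ∉ Z) :
    ∀ t, t ≤ T →
      ((∀ x ∉ Z, ∀ k, 0 < k → (Cw τ Z a ρ t)^[k] x = x →
          ∃ j, (Cw τ Z a ρ t)^[j] x = Xw τ Z a ρ t)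
      ∧ (∃ n, (Cw τ Z a ρ t)^[n] a = Xw τ Z a ρ t ∧
          ∀ i, i < n → (Cw τ Z a ρ t)^[i] a ∉ Z)
      ∧ (0 < t →
          ((Xw τ Z a ρ t ∉ Z ∧
              ∃ k, 0 < k ∧ (Cw τ Z a ρ t)^[k] (Xw τ Z a ρ t) = Xw τ Z a ρ t)
            ∨ (∃ n, 0 < n ∧ (Cw τ Z a ρ t)^[n] a = Xw τ Z a ρ t)) ∧
          prevVertex τ Z a (Cw τ Z a ρ t) (Xw τ Z a ρ t) = Xw τ Z a ρ (t - 1))) := by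
  have hval : ValidConf G Z ρ := SFset_valid hρ
  intro t
  induction t with
  | zero =>
    intro _
    refine ⟨?_, ⟨0, rfl, fun i hi => absurd hi (by omega)⟩, fun h => absurd h (by omega)⟩
    intro x hx k hk hret
    exact absurd (SF_no_cycle hρ hx hk hret) (fun h => h)
  | succ t ih =>
    intro htT
    obtain ⟨KA, KD, _⟩ := ih (by omega)
    have hvZ : Xw τ Z a ρ t ∉ Z := hTlt t (by omega)
    have hupd : Cw τ Z a ρ (t + 1) =
        Function.update (Cw τ Z a ρ t) (Xw τ Z a ρ t) (Xw τ Z a ρ (t + 1)) :=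
      Cw_succ_out t hvZ
    have hadj : Xw τ Z a ρ (t + 1) ∈ G.neighborSet (Xw τ Z a ρ t) :=
      Xw_succ_mem hτ hval t hvZ
    have hwv : Xw τ Z a ρ (t + 1) ≠ Xw τ Z a ρ t :=
      (SimpleGraph.mem_neighborSet G _ _ |>.1 hadj).ne'
    -- minimal first-hit index of the old path from a
    obtain ⟨n₁, hn₁, hn₁Z⟩ := KD
    have hexv : ∃ n, (Cw τ Z a ρ t)^[n] a = Xw τ Z a ρ t := ⟨n₁, hn₁⟩
    classical
    set n₀ := Nat.find hexv with hn₀def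
    have hn₀ : (Cw τ Z a ρ t)^[n₀] a = Xw τ Z a ρ t := Nat.find_spec hexv
    have hn₀min : ∀ i, i < n₀ → (Cw τ Z a ρ t)^[i] a ≠ Xw τ Z a ρ t :=
      fun i hi => Nat.find_min hexv hi
    have hn₀le : n₀ ≤ n₁ := Nat.find_min' hexv hn₁
    have hn₀Z : ∀ i, i < n₀ → (Cw τ Z a ρ t)^[i] a ∉ Z := fun i hi => hn₁Z i (by omega)
    -- path transfers to new config
    have hpath : ∀ i, i ≤ n₀ → (Cw τ Z a ρ (t + 1))^[i] a = (Cw τ Z a ρ t)^[i] a := by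
      rw [hupd]
      exact update_iter_eq' hn₀min
    have hVnew : (Cw τ Z a ρ (t + 1))^[n₀] a = Xw τ Z a ρ t := by
      rw [hpath n₀ le_rfl]; exact hn₀
    have hWnew : (Cw τ Z a ρ (t + 1))^[n₀ + 1] a = Xw τ Z a ρ (t + 1) := by
      rw [Function.iterate_succ_apply', hVnew, hupd, Function.update_self]
    have hZnew : ∀ i, i < n₀ + 1 → (Cw τ Z a ρ (t + 1))^[i] a ∉ Z := by
      intro i hi
      rw [hpath i (by omega)]
      rcases Nat.lt_or_ge i n₀ with h | h
      · exact hn₀Z i h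
      · have : i = n₀ := by omega
        rw [this, hn₀]; exact hvZ
    -- new KA
    have KA' : ∀ x ∉ Z, ∀ k, 0 < k → (Cw τ Z a ρ (t + 1))^[k] x = x →
        ∃ j, (Cw τ Z a ρ (t + 1))^[j] x = Xw τ Z a ρ (t + 1) := by
      intro x hx k hk hret
      by_cases hhit : ∃ j, j < k ∧ (Cw τ Z a ρ (t + 1))^[j] x = Xw τ Z a ρ t
      · obtain ⟨j, _, hj⟩ := hhit
        refine ⟨j + 1, ?_⟩
        rw [Function.iterate_succ_apply', hj, hupd, Function.update_self]
      · push_neg at hhit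
        have heq : ∀ i, i ≤ k → (Cw τ Z a ρ (t + 1))^[i] x = (Cw τ Z a ρ t)^[i] x := by
          rw [hupd]
          apply update_iter_eq
          intro i hi
          rw [← hupd]
          exact hhit i hi
        have hret' : (Cw τ Z a ρ t)^[k] x = x := by rw [← heq k le_rfl]; exact hret
        obtain ⟨j, hj⟩ := KA x hx k hk hret'
        have hjmod : (Cw τ Z a ρ t)^[j % k] x = Xw τ Z a ρ t := by
          rw [← iterate_mod_of_return hk hret' j]; exact hj
        have : (Cw τ Z a ρ (t + 1))^[j % k] x = Xw τ Z a ρ t := by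
          rw [heq _ (le_of_lt (Nat.mod_lt _ hk))]; exact hjmod
        exact absurd this (hhit _ (Nat.mod_lt _ hk))
    refine ⟨KA', ⟨n₀ + 1, hWnew, hZnew⟩, fun _ => ?_⟩
    -- now the branch analysis for prevVertex
    by_cases hcyc : Xw τ Z a ρ (t + 1) ∉ Z ∧
        ∃ k, 0 < k ∧ (Cw τ Z a ρ (t + 1))^[k] (Xw τ Z a ρ (t + 1)) = Xw τ Z a ρ (t + 1)
    · -- cycle case
      set k₀ := Nat.find hcyc.2 with hk₀def
      have hk₀ : 0 < k₀ ∧ (Cw τ Z a ρ (t + 1))^[k₀] (Xw τ Z a ρ (t + 1)) =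
          Xw τ Z a ρ (t + 1) := Nat.find_spec hcyc.2
      have hveq : ∃ j, j < k₀ ∧ (Cw τ Z a ρ (t + 1))^[j] (Xw τ Z a ρ (t + 1)) =
          Xw τ Z a ρ t := by
        by_contra hno
        push_neg at hno
        have heq : ∀ i, i ≤ k₀ → (Cw τ Z a ρ (t + 1))^[i] (Xw τ Z a ρ (t + 1)) =
            (Cw τ Z a ρ t)^[i] (Xw τ Z a ρ (t + 1)) := by
          rw [hupd]
          apply update_iter_eq
          intro i hi
          rw [← hupd]
          exact hno i hi
        have hret' : (Cw τ Z a ρ t)^[k₀] (Xw τ Z a ρ (t + 1)) = Xw τ Z a ρ (t + 1) := by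
          rw [← heq k₀ le_rfl]; exact hk₀.2
        obtain ⟨j, hj⟩ := KA _ hcyc.1 k₀ hk₀.1 hret'
        have hjmod : (Cw τ Z a ρ t)^[j % k₀] (Xw τ Z a ρ (t + 1)) = Xw τ Z a ρ t := by
          rw [← iterate_mod_of_return hk₀.1 hret' j]; exact hj
        have : (Cw τ Z a ρ (t + 1))^[j % k₀] (Xw τ Z a ρ (t + 1)) = Xw τ Z a ρ t := by
          rw [heq _ (le_of_lt (Nat.mod_lt _ hk₀.1))]; exact hjmod
        exact hno _ (Nat.mod_lt _ hk₀.1) this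
      obtain ⟨j, hjlt, hj⟩ := hveq
      have hj1 : (Cw τ Z a ρ (t + 1))^[j + 1] (Xw τ Z a ρ (t + 1)) = Xw τ Z a ρ (t + 1) := by
        rw [Function.iterate_succ_apply', hj, hupd, Function.update_self]
      have hk₀le : k₀ ≤ j + 1 := Nat.find_min' hcyc.2 ⟨by omega, hj1⟩
      have hjeq : j = k₀ - 1 := by omega
      constructor
      · left; exact hcyc
      · rw [prevVertex, dif_pos hcyc, ← hk₀def, ← hjeq, hj]
        simp
    · -- non-cycle case
      have hex2 : ∃ n, 0 < n ∧ (Cw τ Z a ρ (t + 1))^[n] a = Xw τ Z a ρ (t + 1) :=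
        ⟨n₀ + 1, by omega, hWnew⟩
      constructor
      · right; exact hex2
      · rw [prevVertex, dif_neg hcyc, dif_pos hex2]
        set m := Nat.find hex2 with hmdef
        have hm : 0 < m ∧ (Cw τ Z a ρ (t + 1))^[m] a = Xw τ Z a ρ (t + 1) :=
          Nat.find_spec hex2
        have hmle : m ≤ n₀ + 1 := Nat.find_min' hex2 ⟨by omega, hWnew⟩
        have hmeq : m = n₀ + 1 := by
          by_contra hne
          have hmlt : m ≤ n₀ := by omega
          rcases Nat.lt_or_ge m n₀ with hlt | hge
          · -- m < n₀ : early hit of W on the path, creates a cycle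
            have hWval : (Cw τ Z a ρ t)^[m] a = Xw τ Z a ρ (t + 1) := by
              rw [← hpath m (by omega)]; exact hm.2
            have hWZ : Xw τ Z a ρ (t + 1) ∉ Z := by
              rw [← hWval]; exact hn₀Z m hlt
            have hretW : (Cw τ Z a ρ (t + 1))^[(n₀ + 1) - m] (Xw τ Z a ρ (t + 1)) =
                Xw τ Z a ρ (t + 1) := by
              have : (Cw τ Z a ρ (t + 1))^[((n₀ + 1) - m) + m] a = Xw τ Z a ρ (t + 1) := by
                have hh : ((n₀ + 1) - m) + m = n₀ + 1 := by omega
                rw [hh]; exact hWnew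
              rw [Function.iterate_add_apply, hm.2] at this
              exact this
            exact hcyc ⟨hWZ, ⟨(n₀ + 1) - m, by omega, hretW⟩⟩
          · -- m = n₀ : value is Xw t ≠ W
            have hmeq' : m = n₀ := by omega
            have : (Cw τ Z a ρ (t + 1))^[m] a = Xw τ Z a ρ t := by
              rw [hmeq']; exact hVnew
            rw [hm.2] at this
            exact hwv this
        rw [hmeq]
        simp only [Nat.add_sub_cancel]
        exact hVnew

end Inv

section Rev

variable {V : Type u} [DecidableEq V] {G : SimpleGraph V} [∀ v : V, Fintype (G.neighborSet v)]
variable {τ : V → V → V} {Z : Set V} {a : V} {ρ : V → V}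

/-- reverse step of the rotor walk -/
noncomputable def stateRev (G : SimpleGraph V) [∀ v : V, Fintype (G.neighborSet v)]
    (τ : V → V → V) (Z : Set V) (a : V) : V × (V → V) → V × (V → V) := fun p =>
  (prevVertex τ Z a p.2 p.1,
    Function.update p.2 (prevVertex τ Z a p.2 p.1)
      ((τ (prevVertex τ Z a p.2 p.1))^[G.degree (prevVertex τ Z a p.2 p.1) - 1]
        (p.2 (prevVertex τ Z a p.2 p.1))))

lemma eventualVal_eq {f : ℕ → V} {T : ℕ} (hT : ∀ s, T ≤ s → f s = f T) :
    eventualVal f = f T := by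
  unfold eventualVal
  have h : ∃ t : ℕ, ∀ s : ℕ, t ≤ s → f s = f t := ⟨T, hT⟩
  rw [dif_pos h]
  have hc := h.choose_spec
  have h1 : f (max h.choose T) = f h.choose := hc _ (le_max_left _ _)
  have h2 : f (max h.choose T) = f T := hT _ (le_max_right _ _)
  rw [← h1, h2]

lemma finalConfig_eq {T : ℕ} (hTZ : Xw τ Z a ρ T ∈ Z) :
    finalConfig τ Z a ρ = Cw τ Z a ρ T := by
  funext x
  unfold finalConfig
  exact eventualVal_eq (fun s hs => by
    show (rotorWalk τ Z a ρ s).2 x = (rotorWalk τ Z a ρ T).2 x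
    rw [rotorWalk_frozen T hTZ s hs])

variable (hτ : IsMechanism G τ) (hρ : ρ ∈ SFset G Z)
include hτ hρ

lemma stateRev_step {T : ℕ} (hTlt : ∀ s, s < T → Xw τ Z a ρ s ∉ Z) {t : ℕ} (ht : t < T) :
    stateRev G τ Z a (rotorWalk τ Z a ρ (t + 1)) = rotorWalk τ Z a ρ t := by
  have hval : ValidConf G Z ρ := SFset_valid hρ
  obtain ⟨_, _, KP⟩ := inv_main hτ hρ hTlt (t + 1) (by omega)
  have hprev : prevVertex τ Z a (Cw τ Z a ρ (t + 1)) (Xw τ Z a ρ (t + 1)) = Xw τ Z a ρ t :=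
    (KP (by omega)).2
  have hvZ : Xw τ Z a ρ t ∉ Z := hTlt t ht
  have hupd : Cw τ Z a ρ (t + 1) =
      Function.update (Cw τ Z a ρ t) (Xw τ Z a ρ t) (Xw τ Z a ρ (t + 1)) :=
    Cw_succ_out t hvZ
  have hCwv : Cw τ Z a ρ (t + 1) (Xw τ Z a ρ t) = Xw τ Z a ρ (t + 1) := by
    rw [hupd, Function.update_self]
  have hrmem : Cw τ Z a ρ t (Xw τ Z a ρ t) ∈ G.neighborSet (Xw τ Z a ρ t) :=
    (Cw_valid hτ hval t).1 _ hvZ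
  have hdpos : 0 < G.degree (Xw τ Z a ρ t) := by
    rw [G.degree_pos_iff_exists_adj]
    exact ⟨_, hrmem⟩
  have hback : (τ (Xw τ Z a ρ t))^[G.degree (Xw τ Z a ρ t) - 1] (Xw τ Z a ρ (t + 1)) =
      Cw τ Z a ρ t (Xw τ Z a ρ t) := by
    rw [Xw_succ_out t hvZ, ← Function.iterate_succ_apply]
    have h1 : (G.degree (Xw τ Z a ρ t) - 1).succ = G.degree (Xw τ Z a ρ t) := by omega
    rw [h1]
    exact mech_iter_degree hτ _ hrmem
  have hfst : (rotorWalk τ Z a ρ (t + 1)).1 = Xw τ Z a ρ (t + 1) := rfl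
  have hsnd : (rotorWalk τ Z a ρ (t + 1)).2 = Cw τ Z a ρ (t + 1) := rfl
  unfold stateRev
  rw [hsnd, hfst, hprev, hCwv, hback, hupd, Function.update_idem, Function.update_eq_self]
  rfl

lemma reconstruct {T : ℕ} (hTlt : ∀ s, s < T → Xw τ Z a ρ s ∉ Z) :
    ∀ t, t ≤ T → (stateRev G τ Z a)^[t] (rotorWalk τ Z a ρ T) = rotorWalk τ Z a ρ (T - t) := by
  intro t
  induction t with
  | zero => intro _; simp
  | succ n ih =>
    intro hn
    rw [Function.iterate_succ_apply', ih (by omega)]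
    have h1 : T - n = (T - (n + 1)) + 1 := by omega
    rw [h1]
    exact stateRev_step hτ hρ hTlt (by omega)

lemma final_mem_SF [Fintype {y : V // y ∉ Z}] {T : ℕ} (hTZ : Xw τ Z a ρ T ∈ Z)
    (hTlt : ∀ s, s < T → Xw τ Z a ρ s ∉ Z) :
    Cw τ Z a ρ T ∈ SFset G Z := by
  have hval : ValidConf G Z ρ := SFset_valid hρ
  obtain ⟨KA, _, _⟩ := inv_main hτ hρ hTlt T le_rfl
  refine ⟨?_, ?_, (Cw_valid hτ hval T).2⟩
  · intro x hx
    exact (G.mem_neighborSet _ _).1 ((Cw_valid hτ hval T).1 x hx)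
  · intro x
    by_contra hno
    push_neg at hno
    have hfib : ∃ i j : ℕ, i ≠ j ∧
        (⟨(Cw τ Z a ρ T)^[i] x, hno i⟩ : {y : V // y ∉ Z}) = ⟨(Cw τ Z a ρ T)^[j] x, hno j⟩ :=
      Finite.exists_ne_map_eq_of_infinite _
    obtain ⟨i, j, hij, hfe⟩ := hfib
    have heq : (Cw τ Z a ρ T)^[i] x = (Cw τ Z a ρ T)^[j] x := congrArg Subtype.val hfe
    rcases Nat.lt_or_ge i j with hlt | hge
    · have hret : (Cw τ Z a ρ T)^[j - i] ((Cw τ Z a ρ T)^[i] x) = (Cw τ Z a ρ T)^[i] x := by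
        rw [← Function.iterate_add_apply]
        have : j - i + i = j := by omega
        rw [this, ← heq]
      obtain ⟨j', hj'⟩ := KA _ (hno i) (j - i) (by omega) hret
      rw [← Function.iterate_add_apply] at hj'
      exact (hno (j' + i)) (hj' ▸ hTZ)
    · have hlt : j < i := by omega
      have hret : (Cw τ Z a ρ T)^[i - j] ((Cw τ Z a ρ T)^[j] x) = (Cw τ Z a ρ T)^[j] x := by
        rw [← Function.iterate_add_apply]
        have : i - j + j = i := by omega
        rw [this, heq]
      obtain ⟨j', hj'⟩ := KA _ (hno j) (i - j) (by omega) hret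
      rw [← Function.iterate_add_apply] at hj'
      exact (hno (j' + j)) (hj' ▸ hTZ)

omit hρ in
lemma endpoint_det {ρ' : V → V} (hρ' : ρ' ∈ SFset G Z) {T : ℕ} (hTZ : Xw τ Z a ρ' T ∈ Z)
    (hTlt : ∀ s, s < T → Xw τ Z a ρ' s ∉ Z)
    (hex : ∃ m, (Cw τ Z a ρ' T)^[m] a ∈ Z) :
    (Cw τ Z a ρ' T)^[Nat.find hex] a = Xw τ Z a ρ' T := by
  obtain ⟨_, KD, _⟩ := inv_main hτ hρ' hTlt T le_rfl
  obtain ⟨n, hn, hnZ⟩ := KD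
  have hmle : Nat.find hex ≤ n := Nat.find_min' hex (by rw [hn]; exact hTZ)
  rcases Nat.lt_or_ge (Nat.find hex) n with hlt | hge
  · exact absurd (Nat.find_spec hex) (hnZ _ hlt)
  · have : Nat.find hex = n := by omega
    rw [this, hn]

end Rev

section Inj

variable {V : Type u} [DecidableEq V] {G : SimpleGraph V} [∀ v : V, Fintype (G.neighborSet v)]
variable {τ : V → V → V} {Z : Set V} {a : V}

lemma walk_inj_le (hτ : IsMechanism G τ) (ha : a ∉ Z) {ρ₁ ρ₂ : V → V}
    (h₁ : ρ₁ ∈ SFset G Z) (h₂ : ρ₂ ∈ SFset G Z) {T₁ T₂ : ℕ}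
    (hTZ₁ : Xw τ Z a ρ₁ T₁ ∈ Z) (hTlt₁ : ∀ s, s < T₁ → Xw τ Z a ρ₁ s ∉ Z)
    (hTZ₂ : Xw τ Z a ρ₂ T₂ ∈ Z) (hTlt₂ : ∀ s, s < T₂ → Xw τ Z a ρ₂ s ∉ Z)
    (hσ : Cw τ Z a ρ₁ T₁ = Cw τ Z a ρ₂ T₂) (hle : T₁ ≤ T₂) : ρ₁ = ρ₂ := by
  -- endpoints agree
  obtain ⟨_, KD₁, _⟩ := inv_main hτ h₁ hTlt₁ T₁ le_rfl
  obtain ⟨_, KD₂, _⟩ := inv_main hτ h₂ hTlt₂ T₂ le_rfl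
  obtain ⟨n₁, hn₁, hn₁Z⟩ := KD₁
  obtain ⟨n₂, hn₂, hn₂Z⟩ := KD₂
  rw [← hσ] at hn₂ hn₂Z
  have hneq : n₁ = n₂ := by
    rcases Nat.lt_trichotomy n₁ n₂ with h | h | h
    · exact absurd (hn₁ ▸ hTZ₁) (hn₂Z n₁ h)
    · exact h
    · exact absurd (hn₂ ▸ hTZ₂) (hn₁Z n₂ h)
  have hz : Xw τ Z a ρ₁ T₁ = Xw τ Z a ρ₂ T₂ := by
    rw [← hn₁, ← hn₂, hneq]
  have hpair : rotorWalk τ Z a ρ₁ T₁ = rotorWalk τ Z a ρ₂ T₂ := Prod.ext hz hσ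
  have r1 : (stateRev G τ Z a)^[T₁] (rotorWalk τ Z a ρ₁ T₁) = rotorWalk τ Z a ρ₁ 0 := by
    have := reconstruct hτ h₁ hTlt₁ T₁ le_rfl
    rwa [Nat.sub_self] at this
  have r2 : (stateRev G τ Z a)^[T₁] (rotorWalk τ Z a ρ₂ T₂) = rotorWalk τ Z a ρ₂ (T₂ - T₁) :=
    reconstruct hτ h₂ hTlt₂ T₁ hle
  rw [hpair] at r1
  have hws : rotorWalk τ Z a ρ₂ (T₂ - T₁) = rotorWalk τ Z a ρ₁ 0 := r2.symm.trans r1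
  by_cases hT : T₂ - T₁ = 0
  · rw [hT] at hws
    have : ρ₂ = ρ₁ := congrArg Prod.snd hws
    exact this.symm
  · exfalso
    have hXs : Xw τ Z a ρ₂ (T₂ - T₁) = a := congrArg Prod.fst hws
    have hCs : Cw τ Z a ρ₂ (T₂ - T₁) = ρ₁ := congrArg Prod.snd hws
    obtain ⟨_, _, KP⟩ := inv_main hτ h₂ hTlt₂ (T₂ - T₁) (by omega)
    obtain ⟨KE, _⟩ := KP (by omega)
    rcases KE with ⟨_, k, hk, hret⟩ | ⟨n, hn, hret⟩
    · rw [hCs, hXs] at hret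
      exact SF_no_cycle h₁ ha hk hret
    · rw [hCs, hXs] at hret
      exact SF_no_cycle h₁ ha hn hret

lemma walk_inj (hτ : IsMechanism G τ) (ha : a ∉ Z) {ρ₁ ρ₂ : V → V}
    (h₁ : ρ₁ ∈ SFset G Z) (h₂ : ρ₂ ∈ SFset G Z) {T₁ T₂ : ℕ}
    (hTZ₁ : Xw τ Z a ρ₁ T₁ ∈ Z) (hTlt₁ : ∀ s, s < T₁ → Xw τ Z a ρ₁ s ∉ Z)
    (hTZ₂ : Xw τ Z a ρ₂ T₂ ∈ Z) (hTlt₂ : ∀ s, s < T₂ → Xw τ Z a ρ₂ s ∉ Z)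
    (hσ : Cw τ Z a ρ₁ T₁ = Cw τ Z a ρ₂ T₂) : ρ₁ = ρ₂ := by
  rcases le_total T₁ T₂ with h | h
  · exact walk_inj_le hτ ha h₁ h₂ hTZ₁ hTlt₁ hTZ₂ hTlt₂ hσ h
  · exact (walk_inj_le hτ ha h₂ h₁ hTZ₂ hTlt₂ hTZ₁ hTlt₁ hσ.symm h).symm

lemma SFset_finite [Fintype {y : V // y ∉ Z}] : (SFset G Z).Finite := by
  rw [← Set.finite_coe_iff]
  let F : ↥(SFset G Z) → ({y : V // y ∉ Z} → V) := fun ρ y => ρ.1 y.1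
  have hFinj : Function.Injective F := by
    intro ρ₁ ρ₂ h
    apply Subtype.ext
    funext x
    by_cases hx : x ∈ Z
    · rw [ρ₁.2.2.2 x hx, ρ₂.2.2.2 x hx]
    · exact congrFun h ⟨x, hx⟩
  -- target is finite: functions into neighbor sets
  let Gt : ↥(SFset G Z) → ((y : {y : V // y ∉ Z}) → ↥(G.neighborSet y.1)) := fun ρ y =>
    ⟨ρ.1 y.1, ρ.2.1 y.1 y.2⟩
  have hGinj : Function.Injective Gt := by
    intro ρ₁ ρ₂ h
    apply hFinj
    funext y
    exact congrArg Subtype.val (congrFun h y)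
  exact Finite.of_injective Gt hGinj

/-- distance from a vertex to the sink -/
noncomputable def dZ (G : SimpleGraph V) (Z : Set V) (x : V) : ℕ :=
  sInf ((fun z => G.dist x z) '' Z)

lemma SFset_nonempty (hconn : G.Connected) (hZ : Z.Nonempty) : (SFset G Z).Nonempty := by
  classical
  have hdZ_mem : ∀ x : V, ∃ z ∈ Z, G.dist x z = dZ G Z x := by
    intro x
    have hne : ((fun z => G.dist x z) '' Z).Nonempty := hZ.image _
    obtain ⟨z, hz, hd⟩ := Nat.sInf_mem hne
    exact ⟨z, hz, hd⟩
  have hdZ_pos : ∀ x : V, x ∉ Z → 0 < dZ G Z x := by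
    intro x hx
    obtain ⟨z, hz, hd⟩ := hdZ_mem x
    rcases Nat.eq_zero_or_pos (dZ G Z x) with h | h
    · rw [h] at hd
      have : x = z := by
        have hreach : G.Reachable x z := hconn x z
        exact (SimpleGraph.Reachable.dist_eq_zero_iff hreach).1 hd
      exact absurd (this ▸ hz) hx
    · exact h
  have hstep : ∀ x : V, x ∉ Z → ∃ y : V, G.Adj x y ∧ dZ G Z y < dZ G Z x := by
    intro x hx
    obtain ⟨z, hz, hd⟩ := hdZ_mem x
    have hpos : 0 < dZ G Z x := hdZ_pos x hx
    have hreach : G.Reachable x z := hconn x z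
    obtain ⟨p, hp⟩ := hreach.exists_walk_length_eq_dist
    have hlen : 0 < p.length := by rw [hp, hd]; exact hpos
    cases p with
    | nil => simp at hlen
    | @cons _ b _ hadj q =>
      refine ⟨b, hadj, ?_⟩
      have h1 : dZ G Z b ≤ G.dist b z := Nat.sInf_le ⟨z, hz, rfl⟩
      have h2 : G.dist b z ≤ q.length := SimpleGraph.dist_le q
      have h3 : q.length + 1 = G.dist x z := by
        rw [← hp]; rfl
      omega
  choose nxt hnxt using hstep
  set ρ0 : V → V := fun x => if hx : x ∈ Z then x else nxt x hx with hρ0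
  refine ⟨ρ0, ?_, ?_, ?_⟩
  · intro x hx
    rw [hρ0]
    simp only [dif_neg hx]
    exact (hnxt x hx).1
  · intro x
    have : ∀ n : ℕ, ∀ x : V, dZ G Z x ≤ n → ∃ ℓ, ρ0^[ℓ] x ∈ Z := by
      intro n
      induction n with
      | zero =>
        intro x hx
        by_cases hxZ : x ∈ Z
        · exact ⟨0, hxZ⟩
        · exact absurd hx (by have := hdZ_pos x hxZ; omega)
      | succ n ih =>
        intro x hx
        by_cases hxZ : x ∈ Z
        · exact ⟨0, hxZ⟩
        · have hρx : ρ0 x = nxt x hxZ := by rw [hρ0]; simp only [dif_neg hxZ]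
          have hlt : dZ G Z (nxt x hxZ) < dZ G Z x := (hnxt x hxZ).2
          obtain ⟨ℓ, hℓ⟩ := ih (nxt x hxZ) (by omega)
          exact ⟨ℓ + 1, by rw [Function.iterate_succ_apply, hρx]; exact hℓ⟩
    exact this (dZ G Z x) x le_rfl
  · intro x hx
    rw [hρ0]
    simp only [dif_pos hx]

end Inj

section MatrixPart

variable {V : Type u} [DecidableEq V] {G : SimpleGraph V} [∀ v : V, Fintype (G.neighborSet v)]
variable {Z : Set V} [Fintype {y : V // y ∉ Z}]

lemma killedP_nonneg (y x : {y : V // y ∉ Z}) : 0 ≤ killedP G Z y x := by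
  unfold killedP
  split
  · positivity
  · exact le_refl 0

lemma adjfilter_card_le (y : {y : V // y ∉ Z}) :
    (Finset.univ.filter (fun x : {y : V // y ∉ Z} => G.Adj y.1 x.1)).card ≤ G.degree y.1 := by
  classical
  rw [SimpleGraph.degree]
  apply Finset.card_le_card_of_injOn (fun x => x.1)
  · intro x hx
    rw [Finset.mem_coe, Finset.mem_filter] at hx
    rw [Finset.mem_coe, SimpleGraph.mem_neighborFinset]
    exact hx.2
  · intro x _ x' _ h
    exact Subtype.ext h

lemma killedP_row_sum (y : {y : V // y ∉ Z}) :
    ∑ x : {y : V // y ∉ Z}, killedP G Z y x =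
      ((Finset.univ.filter (fun x : {y : V // y ∉ Z} => G.Adj y.1 x.1)).card : ℝ)
        / G.degree y.1 := by
  classical
  unfold killedP
  rw [Finset.sum_ite, Finset.sum_const, Finset.sum_const]
  simp [nsmul_eq_mul]
  ring

lemma killedP_row_sum_le (y : {y : V // y ∉ Z}) :
    ∑ x : {y : V // y ∉ Z}, killedP G Z y x ≤ 1 := by
  rw [killedP_row_sum y]
  rcases Nat.eq_zero_or_pos (G.degree y.1) with h | h
  · rw [h]
    simp
  · rw [div_le_one (by positivity)]
    exact_mod_cast adjfilter_card_le y

lemma oneSubP_isUnit (hconn : G.Connected) (hZ : Z.Nonempty)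
    (hfull : ∃ y : V, y ∉ Z) :
    IsUnit ((1 : Matrix {y : V // y ∉ Z} {y : V // y ∉ Z} ℝ) - killedP G Z) := by
  classical
  haveI : Nonempty {y : V // y ∉ Z} := ⟨⟨hfull.choose, hfull.choose_spec⟩⟩
  apply (Matrix.isUnit_iff_isUnit_det _).2
  apply isUnit_iff_ne_zero.2
  intro hdet
  obtain ⟨v, hvne, hmv⟩ := (Matrix.exists_mulVec_eq_zero_iff).2 hdet
  rw [Matrix.sub_mulVec, Matrix.one_mulVec, sub_eq_zero] at hmv
  have heq : ∀ i, v i = ∑ j, killedP G Z i j * v j := by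
    intro i
    conv_lhs => rw [hmv]
    simp [Matrix.mulVec, dotProduct]
  -- maximizer
  obtain ⟨i₀, _, hi₀⟩ := Finset.univ.exists_max_image (fun i => |v i|)
    (Finset.univ_nonempty)
  set M := |v i₀| with hM
  have hMax : ∀ j, |v j| ≤ M := fun j => hi₀ j (Finset.mem_univ j)
  have hMpos : 0 < M := by
    rcases lt_or_eq_of_le (abs_nonneg (v i₀)) with h | h
    · exact h
    · exfalso
      apply hvne
      funext j
      have h1 : |v j| ≤ 0 := by rw [hM] at hMax; rw [← h] at hMax; exact hMax j
      have := abs_nonneg (v j)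
      have : |v j| = 0 := le_antisymm h1 this
      simpa using this
  -- propagation
  have hprop : ∀ i : {y : V // y ∉ Z}, |v i| = M → ∀ w : V, G.Adj i.1 w →
      ∃ hw : w ∉ Z, |v ⟨w, hw⟩| = M := by
    intro i hvi w hw
    have hdpos : 0 < G.degree i.1 := by
      rw [G.degree_pos_iff_exists_adj]
      exact ⟨w, hw⟩
    have h1 : M ≤ ∑ j, killedP G Z i j * |v j| := by
      calc M = |v i| := hvi.symm
        _ = |∑ j, killedP G Z i j * v j| := by rw [← heq i]
        _ ≤ ∑ j, |killedP G Z i j * v j| := Finset.abs_sum_le_sum_abs _ _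
        _ = ∑ j, killedP G Z i j * |v j| := by
            apply Finset.sum_congr rfl
            intro j _
            rw [abs_mul, abs_of_nonneg (killedP_nonneg i j)]
    have h2 : ∀ j : {y : V // y ∉ Z}, killedP G Z i j * |v j| ≤ killedP G Z i j * M :=
      fun j => mul_le_mul_of_nonneg_left (hMax j) (killedP_nonneg i j)
    have h3 : ∑ j, killedP G Z i j * M ≤ M := by
      rw [← Finset.sum_mul]
      calc (∑ j, killedP G Z i j) * M ≤ 1 * M :=
        mul_le_mul_of_nonneg_right (killedP_row_sum_le (G := G) (Z := Z) i) (le_of_lt hMpos)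
        _ = M := one_mul M
    have hchain : ∑ j, killedP G Z i j * |v j| = ∑ j, killedP G Z i j * M := by
      apply le_antisymm (Finset.sum_le_sum (fun j _ => h2 j))
      have h4 : ∑ j, killedP G Z i j * |v j| ≤ M := le_trans
        (Finset.sum_le_sum (fun j _ => h2 j)) h3
      -- both sums are squeezed between M and M
      have h5 : M ≤ ∑ j, killedP G Z i j * M := le_trans h1
        (Finset.sum_le_sum (fun j _ => h2 j))
      linarith [h1, h3]
    -- row sum must be 1
    have hrow1 : ∑ j, killedP G Z i j = 1 := by
      have h6 : M ≤ (∑ j, killedP G Z i j) * M := by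
        rw [Finset.sum_mul]
        linarith [h1, le_of_eq hchain]
      have h7 := killedP_row_sum_le (G := G) (Z := Z) i
      nlinarith
    -- each term equality
    have hterm : ∀ j : {y : V // y ∉ Z}, killedP G Z i j * |v j| = killedP G Z i j * M := by
      intro j
      by_contra hne
      have hlt : killedP G Z i j * |v j| < killedP G Z i j * M :=
        lt_of_le_of_ne (h2 j) hne
      have : ∑ k, killedP G Z i k * |v k| < ∑ k, killedP G Z i k * M :=
        Finset.sum_lt_sum (fun k _ => h2 k) ⟨j, Finset.mem_univ j, hlt⟩
      rw [hchain] at this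
      exact lt_irrefl _ this
    -- w must avoid Z
    have hwZ : w ∉ Z := by
      intro hwZ
      -- then the filtered card is smaller than degree
      have hsub : (Finset.univ.filter (fun x : {y : V // y ∉ Z} => G.Adj i.1 x.1)).card ≤
          (G.neighborFinset i.1).card - 1 := by
        have hwmem : w ∈ G.neighborFinset i.1 := by
          rw [SimpleGraph.mem_neighborFinset]; exact hw
        have : (Finset.univ.filter (fun x : {y : V // y ∉ Z} => G.Adj i.1 x.1)).card ≤
            ((G.neighborFinset i.1).erase w).card := by
          apply Finset.card_le_card_of_injOn (fun x => x.1)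
          · intro x hx
            rw [Finset.mem_coe, Finset.mem_filter] at hx
            rw [Finset.mem_coe, Finset.mem_erase, SimpleGraph.mem_neighborFinset]
            exact ⟨fun hxw => x.2 ((show x.1 = w from hxw) ▸ hwZ), hx.2⟩
          · intro x _ x' _ h
            exact Subtype.ext h
        rwa [Finset.card_erase_of_mem hwmem] at this
      have hrow := killedP_row_sum (G := G) (Z := Z) i
      rw [hrow1] at hrow
      have hcardeq : (G.neighborFinset i.1).card = G.degree i.1 :=
        G.card_neighborFinset_eq_degree i.1
      have hc : ((Finset.univ.filter (fun x : {y : V // y ∉ Z} => G.Adj i.1 x.1)).card : ℝ) <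
          (G.degree i.1 : ℝ) := by
        have hc' : (Finset.univ.filter (fun x : {y : V // y ∉ Z} => G.Adj i.1 x.1)).card <
            G.degree i.1 := by omega
        exact_mod_cast hc'
      have hd : (0:ℝ) < (G.degree i.1 : ℝ) := by exact_mod_cast hdpos
      rw [eq_comm, div_eq_one_iff_eq (ne_of_gt hd)] at hrow
      linarith
    refine ⟨hwZ, ?_⟩
    have := hterm ⟨w, hwZ⟩
    have hPiw : killedP G Z i ⟨w, hwZ⟩ = 1 / G.degree i.1 := by
      unfold killedP
      rw [if_pos hw]
    rw [hPiw] at this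
    have hdr : (0:ℝ) < 1 / G.degree i.1 := by
      have : (0:ℝ) < G.degree i.1 := by exact_mod_cast hdpos
      positivity
    exact mul_left_cancel₀ (ne_of_gt hdr) this
  -- propagate along a walk to Z
  obtain ⟨z, hz⟩ := hZ
  have hwalk : ∀ (u zz : V) (_ : G.Walk u zz), zz ∈ Z → ∀ hu : u ∉ Z,
      |v ⟨u, hu⟩| = M → False := by
    intro u zz W
    induction W with
    | nil =>
      intro hzz hu _
      exact hu hzz
    | @cons p q r hadj W ih =>
      intro hzz hu hvu
      obtain ⟨hq, hvq⟩ := hprop ⟨p, hu⟩ hvu q hadj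
      exact ih hzz hq hvq
  exact hwalk i₀.1 z ((hconn i₀.1 z).some) hz i₀.2 rfl

end MatrixPart

section ZeroCnt

variable {V : Type u} [DecidableEq V] {G : SimpleGraph V} [∀ v : V, Fintype (G.neighborSet v)]
variable {τ : V → V → V} {Z : Set V} {a : V} {ρ : V → V}

lemma ecnt_eq_zero (hτ : IsMechanism G τ) (hv : ValidConf G Z ρ) {T : ℕ}
    (hTlt : ∀ s, s < T → Xw τ Z a ρ s ∉ Z) {y w : V} (hnadj : ¬ G.Adj y w) :
    ecnt τ Z a ρ T y w = 0 := by
  unfold ecnt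
  rw [Finset.card_eq_zero, Finset.filter_eq_empty_iff]
  intro t ht
  rintro ⟨h1, h2⟩
  have hmem := Xw_succ_mem hτ hv t (by rw [h1]; exact h1 ▸ hTlt t (Finset.mem_range.1 ht))
  rw [h1, h2] at hmem
  exact hnadj ((G.mem_neighborSet y w).1 hmem)

end ZeroCnt

/-- If `Z` is nonempty with `V ∖ Z` finite, then `I - P_Z` is
invertible and, for `a, x ∈ V ∖ Z`, the average over `ρ ∈ SF(Z)` of the odometer
`u(a,Z;ρ)(x)` (finite for every such `ρ`) equals the Green function
`((I - P_Z)⁻¹)_{a,x}`. -/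
theorem stmt5 {V : Type u} [DecidableEq V] (G : SimpleGraph V) (hconn : G.Connected)
    [∀ v : V, Fintype (G.neighborSet v)] (τ : V → V → V) (hτ : IsMechanism G τ)
    (Z : Set V) (hZ : Z.Nonempty) [Fintype {y : V // y ∉ Z}]
    (a x : V) (ha : a ∉ Z) (hx : x ∉ Z) :
    IsUnit ((1 : Matrix {y : V // y ∉ Z} {y : V // y ∉ Z} ℝ) - killedP G Z) ∧
    (∀ ρ ∈ SFset G Z, (visitTimes τ Z a ρ {x}).Finite) ∧
    (∑ᶠ ρ ∈ SFset G Z, ((visitTimes τ Z a ρ {x}).ncard : ℝ)) / (SFset G Z).ncard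
      = ((1 - killedP G Z)⁻¹) ⟨a, ha⟩ ⟨x, hx⟩ := by
  classical
  -- hitting times
  have hhit : ∀ ρ : V → V, ∃ T : ℕ, ρ ∈ SFset G Z →
      (Xw τ Z a ρ T ∈ Z ∧ ∀ s, s < T → Xw τ Z a ρ s ∉ Z) := by
    intro ρ
    by_cases hρ : ρ ∈ SFset G Z
    · have hex : ∃ t, Xw τ Z a ρ t ∈ Z :=
        walk_terminates hτ (SFset_valid hρ) hconn hZ (a := a)
      exact ⟨Nat.find hex, fun _ => ⟨Nat.find_spec hex, fun s hs => Nat.find_min hex hs⟩⟩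
    · exact ⟨0, fun h => absurd h hρ⟩
  choose Tf hTf using hhit
  have hSFfin : (SFset G Z).Finite := SFset_finite
  set SFs : Finset (V → V) := hSFfin.toFinset with hSFs
  have hmemSFs : ∀ ρ, ρ ∈ SFs ↔ ρ ∈ SFset G Z := fun ρ => hSFfin.mem_toFinset
  have hSFne : SFs.Nonempty := by
    obtain ⟨ρ, hρ⟩ := SFset_nonempty hconn hZ
    exact ⟨ρ, (hmemSFs ρ).2 hρ⟩
  set N := SFs.card with hN
  have hNpos : 0 < N := Finset.card_pos.2 hSFne
  -- visit times description
  have hvfin : ∀ ρ, ρ ∈ SFset G Z → (visitTimes τ Z a ρ {x}).Finite ∧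
      ((visitTimes τ Z a ρ {x}).ncard : ℝ) = (nvis τ Z a ρ x (Tf ρ) : ℝ) := by
    intro ρ hρ
    obtain ⟨hTZ, hTlt⟩ := hTf ρ hρ
    rw [visitTimes_eq_coe hTZ hTlt hx]
    constructor
    · exact Finset.finite_toSet _
    · rw [Set.ncard_coe_finset]
      rfl
  have hunit : IsUnit ((1 : Matrix {y : V // y ∉ Z} {y : V // y ∉ Z} ℝ) - killedP G Z) :=
    oneSubP_isUnit hconn hZ ⟨a, ha⟩
  refine ⟨hunit, fun ρ hρ => (hvfin ρ hρ).1, ?_⟩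
  -- the summed odometer vector
  set Svec : {y : V // y ∉ Z} → ℝ :=
    fun y => ∑ ρ ∈ SFs, (nvis τ Z a ρ y.1 (Tf ρ) : ℝ) with hSvec
  -- reindexing along the rotor-routing bijection
  have hreindex : ∀ (f : (V → V) → ℝ),
      ∑ ρ ∈ SFs, f (Cw τ Z a ρ (Tf ρ)) = ∑ σ ∈ SFs, f σ := by
    intro f
    have hΦmem : ∀ ρ ∈ SFs, Cw τ Z a ρ (Tf ρ) ∈ SFs := by
      intro ρ hρ
      obtain ⟨hTZ, hTlt⟩ := hTf ρ ((hmemSFs ρ).1 hρ)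
      exact (hmemSFs _).2 (final_mem_SF hτ ((hmemSFs ρ).1 hρ) hTZ hTlt)
    have hΦinj : ∀ ρ₁ ∈ SFs, ∀ ρ₂ ∈ SFs,
        Cw τ Z a ρ₁ (Tf ρ₁) = Cw τ Z a ρ₂ (Tf ρ₂) → ρ₁ = ρ₂ := by
      intro ρ₁ h₁ ρ₂ h₂ hσ
      obtain ⟨hTZ₁, hTlt₁⟩ := hTf ρ₁ ((hmemSFs ρ₁).1 h₁)
      obtain ⟨hTZ₂, hTlt₂⟩ := hTf ρ₂ ((hmemSFs ρ₂).1 h₂)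
      exact walk_inj hτ ha ((hmemSFs ρ₁).1 h₁) ((hmemSFs ρ₂).1 h₂)
        hTZ₁ hTlt₁ hTZ₂ hTlt₂ hσ
    have himg : SFs.image (fun ρ => Cw τ Z a ρ (Tf ρ)) = SFs := by
      apply Finset.eq_of_subset_of_card_le
      · intro σ hσ
        obtain ⟨ρ, hρ, rfl⟩ := Finset.mem_image.1 hσ
        exact hΦmem ρ hρ
      · rw [Finset.card_image_of_injOn hΦinj]
    conv_rhs => rw [← himg]
    rw [Finset.sum_image hΦinj]
  -- the per-pair transition sums
  have hedge : ∀ (y xx : {y : V // y ∉ Z}),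
      (∑ ρ ∈ SFs, (ecnt τ Z a ρ (Tf ρ) y.1 xx.1 : ℝ)) = Svec y * killedP G Z y xx := by
    intro y xx
    by_cases hadj : G.Adj y.1 xx.1
    · have hw : xx.1 ∈ G.neighborSet y.1 := (G.mem_neighborSet _ _).2 hadj
      have hdpos : 0 < G.degree y.1 := by
        rw [G.degree_pos_iff_exists_adj]; exact ⟨xx.1, hadj⟩
      -- ℕ-identity summed over SFs
      have hsum1 : ∑ ρ ∈ SFs, (G.degree y.1 * ecnt τ Z a ρ (Tf ρ) y.1 xx.1
            + (G.degree y.1 - gidx τ y.1 (Cw τ Z a ρ (Tf ρ) y.1) xx.1) % G.degree y.1)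
          = ∑ ρ ∈ SFs, (nvis τ Z a ρ y.1 (Tf ρ)
            + (G.degree y.1 - gidx τ y.1 (ρ y.1) xx.1) % G.degree y.1) := by
      -- termwise
        apply Finset.sum_congr rfl
        intro ρ hρ
        obtain ⟨hTZ, hTlt⟩ := hTf ρ ((hmemSFs ρ).1 hρ)
        exact edge_identity hτ (SFset_valid ((hmemSFs ρ).1 hρ)) hTlt y.2 hw
      rw [Finset.sum_add_distrib, Finset.sum_add_distrib] at hsum1
      have hcancel : ∑ ρ ∈ SFs,
            (((G.degree y.1 - gidx τ y.1 (Cw τ Z a ρ (Tf ρ) y.1) xx.1) % G.degree y.1 : ℕ) : ℝ)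
          = ∑ ρ ∈ SFs, (((G.degree y.1 - gidx τ y.1 (ρ y.1) xx.1) % G.degree y.1 : ℕ) : ℝ) :=
        hreindex (fun σ => (((G.degree y.1 - gidx τ y.1 (σ y.1) xx.1) % G.degree y.1 : ℕ) : ℝ))
      -- cast hsum1 to ℝ and cancel
      have hsum2 : (G.degree y.1 : ℝ) * ∑ ρ ∈ SFs, (ecnt τ Z a ρ (Tf ρ) y.1 xx.1 : ℝ)
          = Svec y := by
        have hc : ((∑ ρ ∈ SFs, G.degree y.1 * ecnt τ Z a ρ (Tf ρ) y.1 xx.1 : ℕ) : ℝ)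
              + ((∑ ρ ∈ SFs,
                (G.degree y.1 - gidx τ y.1 (Cw τ Z a ρ (Tf ρ) y.1) xx.1) % G.degree y.1 : ℕ) : ℝ)
            = ((∑ ρ ∈ SFs, nvis τ Z a ρ y.1 (Tf ρ) : ℕ) : ℝ)
              + ((∑ ρ ∈ SFs,
                (G.degree y.1 - gidx τ y.1 (ρ y.1) xx.1) % G.degree y.1 : ℕ) : ℝ) := by
          exact_mod_cast congrArg (fun n : ℕ => (n : ℝ)) hsum1
        push_cast at hc
        rw [← Finset.mul_sum] at hc
        have hLy : Svec y = ∑ ρ ∈ SFs, (nvis τ Z a ρ y.1 (Tf ρ) : ℝ) := rfl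
        rw [hLy]
        linarith [hcancel, hc]
      have hP : killedP G Z y xx = 1 / (G.degree y.1 : ℝ) := by
        unfold killedP
        rw [if_pos hadj]
      rw [hP]
      have hdne : (G.degree y.1 : ℝ) ≠ 0 := by
        have : (0:ℝ) < G.degree y.1 := by exact_mod_cast hdpos
        linarith
      field_simp
      linarith [hsum2]
    · have hz : ∀ ρ ∈ SFs, (ecnt τ Z a ρ (Tf ρ) y.1 xx.1 : ℝ) = 0 := by
        intro ρ hρ
        obtain ⟨hTZ, hTlt⟩ := hTf ρ ((hmemSFs ρ).1 hρ)
        rw [ecnt_eq_zero hτ (SFset_valid ((hmemSFs ρ).1 hρ)) hTlt hadj]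
        simp
      rw [Finset.sum_congr rfl hz]
      unfold killedP
      rw [if_neg hadj]
      simp
  -- the flow equation
  have hflow : ∀ xx : {y : V // y ∉ Z}, Svec xx =
      (if xx = ⟨a, ha⟩ then (N : ℝ) else 0) + ∑ y, Svec y * killedP G Z y xx := by
    intro xx
    have hper : ∀ ρ ∈ SFs, (nvis τ Z a ρ xx.1 (Tf ρ) : ℝ) =
        (if xx = ⟨a, ha⟩ then (1:ℝ) else 0)
          + ∑ y : {y : V // y ∉ Z}, (ecnt τ Z a ρ (Tf ρ) y.1 xx.1 : ℝ) := by
      intro ρ hρ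
      obtain ⟨hTZ, hTlt⟩ := hTf ρ ((hmemSFs ρ).1 hρ)
      have hid := flow_identity hTZ hTlt ha xx.2
      have hite : (if a = xx.1 then 1 else 0 : ℕ) = (if xx = ⟨a, ha⟩ then 1 else 0 : ℕ) := by
        by_cases h : xx = ⟨a, ha⟩
        · rw [if_pos h, if_pos (by rw [h])]
        · rw [if_neg h, if_neg (fun hh => h (Subtype.ext hh.symm))]
      rw [hite] at hid
      rw [hid]
      push_cast
      ring
    have hL : Svec xx = ∑ ρ ∈ SFs, (nvis τ Z a ρ xx.1 (Tf ρ) : ℝ) := rfl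
    rw [hL, Finset.sum_congr rfl hper, Finset.sum_add_distrib]
    congr 1
    · rw [Finset.sum_const, hN]
      split <;> simp
    · rw [Finset.sum_comm]
      apply Finset.sum_congr rfl
      intro y _
      exact hedge y xx
  -- matrix equation
  have hvm : Matrix.vecMul Svec (1 - killedP G Z) =
      (fun xx => (if xx = ⟨a, ha⟩ then (N : ℝ) else 0)) := by
    funext xx
    rw [Matrix.vecMul_sub, Matrix.vecMul_one]
    have hap : Matrix.vecMul Svec (killedP G Z) xx = ∑ y, Svec y * killedP G Z y xx := by
      simp [Matrix.vecMul, dotProduct]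
    simp only [Pi.sub_apply, hap]
    rw [hflow xx]
    ring
  have hdet : IsUnit ((1 : Matrix {y : V // y ∉ Z} {y : V // y ∉ Z} ℝ) - killedP G Z).det :=
    (Matrix.isUnit_iff_isUnit_det _).1 hunit
  have hS : Svec = Matrix.vecMul (fun xx => (if xx = ⟨a, ha⟩ then (N : ℝ) else 0))
      (1 - killedP G Z)⁻¹ := by
    rw [← hvm, Matrix.vecMul_vecMul, Matrix.mul_nonsing_inv _ hdet, Matrix.vecMul_one]
  have hfinal : Svec ⟨x, hx⟩ = (N : ℝ) *
      ((1 - killedP G Z)⁻¹ ⟨a, ha⟩ ⟨x, hx⟩) := by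
    rw [hS]
    have : Matrix.vecMul (fun xx => (if xx = ⟨a, ha⟩ then (N : ℝ) else 0))
        (1 - killedP G Z)⁻¹ ⟨x, hx⟩
        = ∑ y, (if y = ⟨a, ha⟩ then (N : ℝ) else 0) * (1 - killedP G Z)⁻¹ y ⟨x, hx⟩ := by
      simp [Matrix.vecMul, dotProduct]
    rw [this]
    rw [Finset.sum_eq_single (⟨a, ha⟩ : {y : V // y ∉ Z})]
    · rw [if_pos rfl]
    · intro b _ hb
      rw [if_neg hb, zero_mul]
    · intro hb
      exact absurd (Finset.mem_univ _) hb
  -- conclude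
  have hlhs : (∑ᶠ ρ ∈ SFset G Z, ((visitTimes τ Z a ρ {x}).ncard : ℝ)) = Svec ⟨x, hx⟩ := by
    rw [finsum_mem_eq_finite_toFinset_sum _ hSFfin]
    rw [hSvec]
    apply Finset.sum_congr rfl
    intro ρ hρ
    exact (hvfin ρ ((hmemSFs ρ).1 hρ)).2
  have hncard : ((SFset G Z).ncard : ℝ) = (N : ℝ) := by
    rw [Set.ncard_eq_toFinset_card _ hSFfin, hN]
  rw [hlhs, hncard, hfinal]
  have hNne : (N : ℝ) ≠ 0 := by
    have : (0:ℝ) < N := by exact_mod_cast hNpos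
    linarith
  field_simp
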